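/- arXiv:1210.6749 — 6 statements merged into one kernel-verified Lean document; each statement's English description precedes it below -/
import Mathlib

section
/- Let p ≥ 2. Then for all x > 0, sinh_p(x)/x < (cosh_p(x) + 2)/3. -/
open Real Set Filter Topology

/-- Generalized inverse sine: `arcsin_p x = ∫₀ˣ (1 - tᵖ)^(-1/p) dt`. -/
noncomputable def arcsinp (p : ℝ) (x : ℝ) : ℝ := ∫ t in (0:ℝ)..x, (1 - t ^ p) ^ (-1 / p)

/-- Generalized π: `π_p = 2 · arcsin_p 1`. -/
noncomputable def pip (p : ℝ) : ℝ := 2 * arcsinp p 1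

/-- Generalized sine: the inverse of `arcsinp p` (as a map from `[0,1]`). -/
noncomputable def sinp (p : ℝ) : ℝ → ℝ := Function.invFunOn (arcsinp p) (Set.Icc 0 1)

/-- Generalized cosine. -/
noncomputable def cosp (p : ℝ) (x : ℝ) : ℝ := (1 - (sinp p x) ^ p) ^ (1 / p)

/-- Generalized tangent. -/
noncomputable def tanp (p : ℝ) (x : ℝ) : ℝ := sinp p x / cosp p x

/-- Generalized inverse hyperbolic sine: `arsinh_p x = ∫₀ˣ (1 + tᵖ)^(-1/p) dt`. -/
noncomputable def arsinhp (p : ℝ) (x : ℝ) : ℝ := ∫ t in (0:ℝ)..x, (1 + t ^ p) ^ (-1 / p)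

/-- Generalized hyperbolic sine: the inverse of `arsinhp p` (as a map from `[0,∞)`). -/
noncomputable def sinhp (p : ℝ) : ℝ → ℝ := Function.invFunOn (arsinhp p) (Set.Ici 0)

/-- Generalized hyperbolic cosine. -/
noncomputable def coshp (p : ℝ) (x : ℝ) : ℝ := (1 + (sinhp p x) ^ p) ^ (1 / p)

/-- Generalized hyperbolic tangent. -/
noncomputable def tanhp (p : ℝ) (x : ℝ) : ℝ := sinhp p x / coshp p x

section StmtAux
open MeasureTheory
variable {p : ℝ}

private lemma stmt13.hpp (hp : 2 ≤ p) : 0 < p := lt_of_lt_of_le two_pos hp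

private lemma stmt13.base_pos (hp : 2 ≤ p) {t : ℝ} (ht : 0 ≤ t) : 0 < 1 + t ^ p := by
  have := Real.rpow_nonneg ht p
  linarith

private lemma stmt13.contAt (hp : 2 ≤ p) (e : ℝ) {t : ℝ} (ht : 0 ≤ t) :
    ContinuousAt (fun t : ℝ => (1 + t ^ p) ^ e) t := by
  have h1 : ContinuousAt (fun t : ℝ => 1 + t ^ p) t :=
    continuousAt_const.add (Real.continuousAt_rpow_const t p (Or.inr (stmt13.hpp hp).le))
  have h2 : ContinuousAt (fun u : ℝ => u ^ e) (1 + t ^ p) :=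
    Real.continuousAt_rpow_const _ e (Or.inl (stmt13.base_pos hp ht).ne')
  exact ContinuousAt.comp (g := fun u : ℝ => u ^ e) h2 h1

private lemma stmt13.intInt (hp : 2 ≤ p) {a b : ℝ} (ha : 0 ≤ a) (hb : 0 ≤ b) :
    IntervalIntegrable (fun t : ℝ => (1 + t ^ p) ^ (-1 / p)) volume a b := by
  apply ContinuousOn.intervalIntegrable
  intro t htm
  have ht : 0 ≤ t := by
    rcases le_total a b with h | h
    · rw [uIcc_of_le h] at htm; exact le_trans ha htm.1
    · rw [uIcc_of_ge h] at htm; exact le_trans hb htm.1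
  exact (stmt13.contAt hp _ ht).continuousWithinAt

private lemma stmt13.arsinhp_contOn (hp : 2 ≤ p) {b : ℝ} (hb : 0 ≤ b) :
    ContinuousOn (arsinhp p) (Icc 0 b) := by
  have := intervalIntegral.continuousOn_primitive_interval'
    (stmt13.intInt hp le_rfl hb) (left_mem_uIcc (a := (0:ℝ)) (b := b))
  rwa [uIcc_of_le hb] at this

private lemma stmt13.key_ineq (hp : 2 ≤ p) {σ : ℝ} (hσ : 0 < σ) :
    3 * σ / ((1 + σ ^ p) ^ (1 / p) + 2) < arsinhp p σ := by
  have hp0 := stmt13.hpp hp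
  set G : ℝ → ℝ := fun s => arsinhp p s - 3 * s / ((1 + s ^ p) ^ (1 / p) + 2) with hG
  have hden : ∀ s : ℝ, 0 ≤ s → 0 < (1 + s ^ p) ^ (1 / p) + 2 := fun s hs => by
    have := Real.rpow_nonneg (stmt13.base_pos hp hs).le (1 / p); linarith
  have hGc : ContinuousOn G (Icc 0 σ) := by
    apply (stmt13.arsinhp_contOn hp hσ.le).sub
    apply ContinuousOn.div
    · exact (continuous_const.mul continuous_id).continuousOn
    · intro s hs
      exact ((stmt13.contAt hp (1 / p) hs.1).add continuousAt_const).continuousWithinAt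
    · intro s hs; exact (hden s hs.1).ne'
  have hG' : ∀ x ∈ interior (Icc (0:ℝ) σ), 0 < deriv G x := by
    rw [interior_Icc]
    intro x hx
    obtain ⟨hx0, _⟩ := hx
    have hb : 0 < 1 + x ^ p := stmt13.base_pos hp hx0.le
    have hmeas : StronglyMeasurableAtFilter (fun t : ℝ => (1 + t ^ p) ^ (-1 / p)) (𝓝 x) volume :=
      ContinuousAt.stronglyMeasurableAtFilter isOpen_Ioi
        (fun t ht => stmt13.contAt hp _ (le_of_lt ht)) x hx0
    have hF : HasDerivAt (arsinhp p) ((1 + x ^ p) ^ (-1 / p)) x :=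
      intervalIntegral.integral_hasDerivAt_right (stmt13.intInt hp le_rfl hx0.le)
        hmeas (stmt13.contAt hp (-1 / p) hx0.le)
    have h1 : HasDerivAt (fun s : ℝ => s ^ p) (p * x ^ (p - 1)) x :=
      Real.hasDerivAt_rpow_const (Or.inl hx0.ne')
    have h2 : HasDerivAt (fun s : ℝ => 1 + s ^ p) (p * x ^ (p - 1)) x := h1.const_add 1
    have h3 : HasDerivAt (fun u : ℝ => u ^ (1 / p)) (1 / p * (1 + x ^ p) ^ (1 / p - 1))
        (1 + x ^ p) := Real.hasDerivAt_rpow_const (Or.inl hb.ne')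
    have hc : HasDerivAt (fun s : ℝ => (1 + s ^ p) ^ (1 / p))
        (1 / p * (1 + x ^ p) ^ (1 / p - 1) * (p * x ^ (p - 1))) x := by have := h3.comp x h2; exact this
    have hnum : HasDerivAt (fun s : ℝ => 3 * s) 3 x := by
      simpa using (hasDerivAt_id x).const_mul 3
    have hQ := hnum.div (hc.add_const 2) (hden x hx0.le).ne'
    have hGd := hF.sub hQ
    rw [hG]
    rw [show deriv (fun s : ℝ => arsinhp p s - 3 * s / ((1 + s ^ p) ^ (1 / p) + 2)) x = _ from hGd.deriv]
    set c := (1 + x ^ p) ^ (1 / p) with hcdef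
    have hc1 : 1 < c := by
      rw [hcdef, Real.one_lt_rpow_iff_of_pos hb]
      have hxp : 0 < x ^ p := Real.rpow_pos_of_pos hx0 p
      exact Or.inl ⟨by linarith, by positivity⟩
    have hc0 : 0 < c := lt_trans one_pos hc1
    have hcp : c ^ p = 1 + x ^ p := by
      rw [hcdef, ← Real.rpow_mul hb.le, one_div_mul_cancel hp0.ne', Real.rpow_one]
    have hxp_eq : x ^ p = c ^ p - 1 := by rw [hcp]; ring
    have hfx : (1 + x ^ p) ^ (-1 / p) = c⁻¹ := by
      rw [hcdef, neg_div, Real.rpow_neg hb.le]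
    have hq : (1 + x ^ p) ^ (1 / p - 1) = c ^ (1 - p) := by
      rw [hcdef, ← Real.rpow_mul hb.le, mul_sub, mul_one, one_div_mul_cancel hp0.ne']
    have hxx : x * x ^ (p - 1) = x ^ p := by
      rw [Real.rpow_sub hx0, Real.rpow_one]; field_simp
    have hcc : c ^ p * c ^ (1 - p) = c := by
      rw [← Real.rpow_add hc0, show p + (1 - p) = 1 by ring, Real.rpow_one]
    have hq1 : 0 < c ^ (1 - p) := Real.rpow_pos_of_pos hc0 _
    have hcq : c * c ^ (1 - p) ≤ 1 := by
      have e1 : c * c ^ (1 - p) = c ^ (2 - p) := by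
        nth_rewrite 1 [← Real.rpow_one c]
        rw [← Real.rpow_add hc0, show (1:ℝ) + (1 - p) = 2 - p by ring]
      rw [e1]
      exact Real.rpow_le_one_of_one_le_of_nonpos hc1.le (by linarith)
    have hmid : 3 * x * (1 / p * (1 + x ^ p) ^ (1 / p - 1) * (p * x ^ (p - 1)))
        = 3 * (c - c ^ (1 - p)) := by
      rw [hq]
      have e2 : 3 * x * (1 / p * c ^ (1 - p) * (p * x ^ (p - 1)))
          = 3 * ((x * x ^ (p - 1)) * c ^ (1 - p)) * (1 / p * p) := by ring
      rw [e2, one_div_mul_cancel hp0.ne', mul_one, hxx, hxp_eq, sub_mul, hcc, one_mul]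
    rw [hfx, hmid]
    have h2pos : 0 < (c + 2) ^ 2 := by positivity
    rw [sub_pos, div_lt_iff₀ h2pos, inv_mul_eq_div, lt_div_iff₀ hc0]
    nlinarith [hcq, hq1, pow_pos (sub_pos.mpr hc1) 2]
  have hmono : StrictMonoOn G (Icc 0 σ) := strictMonoOn_of_deriv_pos (convex_Icc 0 σ) hGc hG'
  have h0 : G 0 = 0 := by simp [hG, arsinhp]
  have := hmono (left_mem_Icc.mpr hσ.le) (right_mem_Icc.mpr hσ.le) hσ
  rw [h0, hG] at this
  simp only at this
  linarith

private lemma stmt13.arsinhp_surj (hp : 2 ≤ p) {x : ℝ} (hx : 0 < x) :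
    ∃ s ∈ Ici (0:ℝ), arsinhp p s = x := by
  have hp0 := stmt13.hpp hp
  set E := Real.exp (2 ^ (1 / p) * x) with hE
  have hE1 : 1 ≤ E := Real.one_le_exp (by positivity)
  have hE0 : 0 < E := lt_of_lt_of_le one_pos hE1
  have hsplit : arsinhp p 1 + (∫ t in (1:ℝ)..E, (1 + t ^ p) ^ (-1 / p)) = arsinhp p E :=
    intervalIntegral.integral_add_adjacent_intervals (stmt13.intInt hp le_rfl zero_le_one)
      (stmt13.intInt hp zero_le_one hE0.le)
  have h1 : 0 ≤ arsinhp p 1 :=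
    intervalIntegral.integral_nonneg zero_le_one
      (fun u hu => Real.rpow_nonneg (stmt13.base_pos hp hu.1).le _)
  have hgint : IntervalIntegrable (fun t : ℝ => 2 ^ (-1 / p) * t⁻¹) volume 1 E := by
    apply ContinuousOn.intervalIntegrable
    apply ContinuousOn.mul continuousOn_const
    apply ContinuousOn.inv₀ continuousOn_id
    intro t ht
    rw [uIcc_of_le hE1] at ht
    exact ne_of_gt (lt_of_lt_of_le one_pos ht.1)
  have hcomp : (∫ t in (1:ℝ)..E, 2 ^ (-1 / p) * t⁻¹)
      ≤ ∫ t in (1:ℝ)..E, (1 + t ^ p) ^ (-1 / p) := by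
    apply intervalIntegral.integral_mono_on hE1 hgint (stmt13.intInt hp zero_le_one hE0.le)
    intro t ht
    have ht1 : 1 ≤ t := ht.1
    have ht0 : 0 < t := lt_of_lt_of_le one_pos ht1
    have htp1 : 1 ≤ t ^ p := Real.one_le_rpow ht1 hp0.le
    have hexp : -1 / p ≤ 0 := by
      rw [neg_div]; exact neg_nonpos.mpr (by positivity)
    have key : (2 * t ^ p) ^ (-1 / p) ≤ (1 + t ^ p) ^ (-1 / p) :=
      Real.rpow_le_rpow_of_nonpos (stmt13.base_pos hp ht0.le) (by linarith) hexp
    have heq : (2 * t ^ p) ^ (-1 / p) = 2 ^ (-1 / p) * t⁻¹ := by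
      rw [Real.mul_rpow (by norm_num) (Real.rpow_nonneg ht0.le p)]
      congr 1
      rw [← Real.rpow_mul ht0.le, show p * (-1 / p) = -1 by field_simp, Real.rpow_neg_one]
    rw [← heq]
    exact key
  have hval : (∫ t in (1:ℝ)..E, 2 ^ (-1 / p) * t⁻¹) = x := by
    rw [intervalIntegral.integral_const_mul, integral_inv_of_pos one_pos hE0, div_one, hE,
      Real.log_exp, ← mul_assoc, ← Real.rpow_add two_pos,
      show -1 / p + 1 / p = 0 by ring, Real.rpow_zero, one_mul]
  have hxE : x ≤ arsinhp p E := by rw [← hsplit]; linarith [hcomp, h1, hval.ge, hval.le]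
  have himage := intermediate_value_Icc hE0.le (stmt13.arsinhp_contOn hp hE0.le)
  have h0 : arsinhp p 0 = 0 := by simp [arsinhp]
  have hxmem : x ∈ Icc (arsinhp p 0) (arsinhp p E) := by rw [h0]; exact ⟨hx.le, hxE⟩
  obtain ⟨s, hs, hsx⟩ := himage hxmem
  exact ⟨s, hs.1, hsx⟩

end StmtAux

theorem stmt13 (p : ℝ) (hp : 2 ≤ p) :
    ∀ x > (0:ℝ), sinhp p x / x < (coshp p x + 2) / 3 := by
  intro x hx
  have hex : ∃ s ∈ Ici (0:ℝ), arsinhp p s = x := stmt13.arsinhp_surj hp hx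
  have hσeq : arsinhp p (sinhp p x) = x := Function.invFunOn_eq hex
  have hσmem : sinhp p x ∈ Ici (0:ℝ) := Function.invFunOn_mem hex
  set σ := sinhp p x with hσ
  have hσ0 : 0 ≤ σ := hσmem
  have hσpos : 0 < σ := by
    refine lt_of_le_of_ne hσ0 (fun h => ?_)
    rw [← h] at hσeq
    simp [arsinhp] at hσeq
    linarith
  have key := stmt13.key_ineq hp hσpos
  rw [hσeq] at key
  have hcosh : coshp p x = (1 + σ ^ p) ^ (1 / p) := by rw [hσ]; rfl
  rw [hcosh]
  have hden : 0 < (1 + σ ^ p) ^ (1 / p) + 2 := by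
    have := Real.rpow_nonneg (stmt13.base_pos hp hσ0).le (1 / p); linarith
  rw [div_lt_div_iff₀ hx (by norm_num : (0:ℝ) < 3)]
  have h3 := (div_lt_iff₀ hden).mp key
  nlinarith [h3]
end

section
/- Let p ≥ 2. Then for all x ∈ (0, π_p/2], sin_p(x)/x > (p − 1 + cos_p(x))/p ≥ (1 + cos_p(x))/2. -/
open Real Set Filter Topology

open MeasureTheory

set_option maxHeartbeats 1000000

/-- Bernoulli-type inequality for nonpositive exponents on (0,1]. -/
private lemma bern_neg {c q : ℝ} (hc0 : 0 < c) (hc1 : c ≤ 1) (hq : 0 ≤ q) :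
    1 + q * (1 - c) ≤ c ^ (-q) := by
  have hcq : (0:ℝ) < c ^ q := Real.rpow_pos_of_pos hc0 q
  have key : (1 + q * (1 - c)) * c ^ q ≤ 1 := by
    rcases le_total q 1 with h1 | h1
    · have hb : c ^ q ≤ 1 + q * (c - 1) := by
        have h := rpow_one_add_le_one_add_mul_self (s := c - 1) (by linarith) hq h1
        have e : (1:ℝ) + (c - 1) = c := by ring
        rwa [e] at h
      nlinarith [sq_nonneg (q * (1 - c))]
    · have hb : 1 + q * (1 - c) ≤ (2 - c) ^ q := by
        have h := one_add_mul_self_le_rpow_one_add (s := 1 - c) (by linarith) h1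
        have e : (1:ℝ) + (1 - c) = 2 - c := by ring
        rwa [e] at h
      have h2 : (2 - c) ^ q * c ^ q = ((2 - c) * c) ^ q :=
        (Real.mul_rpow (by linarith) hc0.le).symm
      have h3 : ((2 - c) * c) ^ q ≤ 1 :=
        Real.rpow_le_one (by nlinarith) (by nlinarith) hq
      calc (1 + q * (1 - c)) * c ^ q ≤ (2 - c) ^ q * c ^ q :=
            mul_le_mul_of_nonneg_right hb hcq.le
        _ = ((2 - c) * c) ^ q := h2
        _ ≤ 1 := h3
  rw [Real.rpow_neg hc0.le, ← one_div]
  exact (le_div_iff₀ hcq).2 key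

section Aux

variable {p : ℝ}

private lemma g_cont_at (hp : 2 ≤ p) {t : ℝ} (ht : t ∈ Ioo (0:ℝ) 1) :
    ContinuousAt (fun t : ℝ => (1 - t ^ p) ^ (-1 / p)) t := by
  have hp0 : (0:ℝ) < p := by linarith
  have htp : t ^ p < 1 := Real.rpow_lt_one ht.1.le ht.2 hp0
  have h1 : ContinuousAt (fun x : ℝ => 1 - x ^ p) t :=
    continuousAt_const.sub (Real.continuousAt_rpow_const t p (Or.inr hp0.le))
  exact h1.rpow_const (Or.inl (sub_ne_zero.mpr htp.ne'))

private lemma g_intable (hp : 2 ≤ p) :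
    IntervalIntegrable (fun t : ℝ => (1 - t ^ p) ^ (-1 / p)) volume 0 1 := by
  have hp0 : (0:ℝ) < p := by linarith
  have hdom : IntervalIntegrable (fun t : ℝ => (1 - t) ^ (-1 / p)) volume 0 1 := by
    have h0 : IntervalIntegrable (fun x : ℝ => x ^ (-1 / p)) volume 0 1 := by
      apply intervalIntegral.intervalIntegrable_rpow'
      rw [neg_div]
      have : 1 / p < 1 := by rw [div_lt_one hp0]; linarith
      linarith
    have h1 := h0.comp_sub_left 1
    norm_num at h1
    exact h1.symm
  have hmeas : AEStronglyMeasurable (fun t : ℝ => (1 - t ^ p) ^ (-1 / p))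
      (volume.restrict (Set.uIoc (0:ℝ) 1)) := by
    rw [uIoc_of_le (zero_le_one (α := ℝ)),
      ← Measure.restrict_congr_set Ioo_ae_eq_Ioc]
    exact (continuousOn_of_forall_continuousAt fun t ht => g_cont_at hp ht).aestronglyMeasurable
      measurableSet_Ioo
  apply hdom.mono_fun hmeas
  rw [uIoc_of_le (zero_le_one (α := ℝ)), Filter.EventuallyLE,
    ae_restrict_iff' measurableSet_Ioc]
  refine ae_of_all _ fun t ht => ?_
  have ht0 : 0 < t := ht.1
  have ht1 : t ≤ 1 := ht.2
  have htp1 : t ^ p ≤ 1 := Real.rpow_le_one ht0.le ht1 hp0.le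
  have hnn : 0 ≤ (1 - t ^ p) ^ (-1 / p) := Real.rpow_nonneg (by linarith) _
  have hnn2 : 0 ≤ (1 - t) ^ (-1 / p) := Real.rpow_nonneg (by linarith) _
  rw [Real.norm_eq_abs, Real.norm_eq_abs, abs_of_nonneg hnn, abs_of_nonneg hnn2]
  rcases eq_or_lt_of_le ht1 with rfl | ht1'
  · simp [Real.one_rpow, Real.zero_rpow (show (-1 / p : ℝ) ≠ 0 by rw [neg_div]; exact neg_ne_zero.mpr (one_div_pos.mpr hp0).ne')]
  · have htpt : t ^ p ≤ t := by
      calc t ^ p ≤ t ^ (1:ℝ) := Real.rpow_le_rpow_of_exponent_ge ht0 ht1 (by linarith)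
        _ = t := Real.rpow_one t
    exact Real.rpow_le_rpow_of_nonpos (by linarith) (by linarith)
      (by rw [neg_div]; exact neg_nonpos.mpr (one_div_nonneg.mpr hp0.le))

private lemma arcsinp_contOn (hp : 2 ≤ p) : ContinuousOn (arcsinp p) (Icc 0 1) := by
  have h := intervalIntegral.continuousOn_primitive_interval'
    (g_intable hp) (left_mem_uIcc (a := (0:ℝ)) (b := 1))
  rw [uIcc_of_le (zero_le_one (α := ℝ))] at h
  exact h

private lemma arcsinp_lt (hp : 2 ≤ p) {s : ℝ} (hs : s ∈ Ioc (0:ℝ) 1) :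
    arcsinp p s < p * s / (p - 1 + (1 - s ^ p) ^ (1 / p)) := by
  have hp0 : (0:ℝ) < p := by linarith
  set G : ℝ → ℝ := fun y => p * y / (p - 1 + (1 - y ^ p) ^ (1 / p)) with hG_def
  -- positivity of the denominator on [0,1]
  have hd_pos : ∀ y ∈ Icc (0:ℝ) 1, 0 < p - 1 + (1 - y ^ p) ^ (1 / p) := by
    intro y hy
    have h1 : y ^ p ≤ 1 := Real.rpow_le_one hy.1 hy.2 hp0.le
    have : (0:ℝ) ≤ (1 - y ^ p) ^ (1 / p) := Real.rpow_nonneg (by linarith) _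
    linarith
  -- continuity of G on [0,1]
  have hc_pow : Continuous fun y : ℝ => y ^ p :=
    continuous_iff_continuousAt.2 fun x => Real.continuousAt_rpow_const x p (Or.inr hp0.le)
  have hc_c : Continuous fun y : ℝ => (1 - y ^ p) ^ (1 / p) :=
    (continuous_const.sub hc_pow).rpow_const fun x => Or.inr (one_div_nonneg.mpr hp0.le)
  have hGcont : ContinuousOn G (Icc 0 1) :=
    ((continuous_const.mul continuous_id).continuousOn).div
      ((continuous_const.add hc_c).continuousOn) fun x hx => (hd_pos x hx).ne'
  have hDcont : ContinuousOn (fun y => G y - arcsinp p y) (Icc 0 1) :=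
    hGcont.sub (arcsinp_contOn hp)
  -- derivative positivity on the interior
  have hderiv : ∀ x ∈ interior (Icc (0:ℝ) 1),
      0 < deriv (fun y => G y - arcsinp p y) x := by
    rw [interior_Icc]
    intro x hx
    have hx0 : 0 < x := hx.1
    have hx1 : x < 1 := hx.2
    have hxp1 : x ^ p < 1 := Real.rpow_lt_one hx0.le hx1 hp0
    have hxp0 : 0 < x ^ p := Real.rpow_pos_of_pos hx0 p
    set u : ℝ := 1 - x ^ p with hu_def
    have hu0 : 0 < u := by simp only [hu_def]; linarith
    have hu1 : u < 1 := by simp only [hu_def]; linarith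
    set c : ℝ := u ^ (1 / p) with hc_def
    have hc0 : 0 < c := Real.rpow_pos_of_pos hu0 _
    have hc1 : c < 1 := Real.rpow_lt_one hu0.le hu1 (by positivity)
    have hd0 : 0 < p - 1 + c := by linarith
    -- derivative of arcsinp
    have hF : HasDerivAt (arcsinp p) ((1 - x ^ p) ^ (-1 / p)) x := by
      have h := intervalIntegral.integral_hasDerivAt_right
        ((g_intable hp).mono_set (by
          rw [uIcc_of_le hx0.le, uIcc_of_le (zero_le_one (α := ℝ))]
          exact Icc_subset_Icc le_rfl hx1.le))
        ((ContinuousOn.stronglyMeasurableAtFilter isOpen_Ioo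
          (fun t ht => (g_cont_at hp ht).continuousWithinAt)) x hx)
        (g_cont_at hp hx)
      exact h
    -- derivative of the inner functions
    have hxpow : HasDerivAt (fun y : ℝ => y ^ p) (p * x ^ (p - 1)) x :=
      Real.hasDerivAt_rpow_const (Or.inl hx0.ne')
    have hu' : HasDerivAt (fun y : ℝ => 1 - y ^ p) (-(p * x ^ (p - 1))) x := by
      have h := (hasDerivAt_const x (1:ℝ)).sub hxpow
      rw [zero_sub] at h
      exact h
    have hcd : HasDerivAt (fun y : ℝ => (1 - y ^ p) ^ (1 / p))
        (-(p * x ^ (p - 1)) * (1 / p) * (1 - x ^ p) ^ (1 / p - 1)) x :=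
      hu'.rpow_const (Or.inl (sub_ne_zero.mpr hxp1.ne'))
    have hdd : HasDerivAt (fun y : ℝ => p - 1 + (1 - y ^ p) ^ (1 / p))
        (-(p * x ^ (p - 1)) * (1 / p) * (1 - x ^ p) ^ (1 / p - 1)) x := by
      have h := (hasDerivAt_const x (p - 1)).add hcd
      rw [zero_add] at h
      exact h
    have hnum : HasDerivAt (fun y : ℝ => p * y) p x := by
      simpa using (hasDerivAt_id x).const_mul p
    have hG : HasDerivAt G
        ((p * (p - 1 + c) - p * x *
          (-(p * x ^ (p - 1)) * (1 / p) * u ^ (1 / p - 1))) / (p - 1 + c) ^ 2) x :=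
      hnum.div hdd hd0.ne'
    -- clean up the derivative value
    have e1 : x * x ^ (p - 1) = 1 - u := by
      have : x * x ^ (p - 1) = x ^ (1 + (p - 1)) := by
        rw [Real.rpow_add hx0, Real.rpow_one]
      rw [this]; simp only [hu_def]; ring_nf
    have e2 : u ^ (1 / p - 1) = c / u := by
      rw [show (1 / p - 1 : ℝ) = 1 / p + (-1) by ring, Real.rpow_add hu0,
        Real.rpow_neg_one, ← hc_def, div_eq_mul_inv]
    have hval : (p * (p - 1 + c) - p * x *
          (-(p * x ^ (p - 1)) * (1 / p) * u ^ (1 / p - 1))) / (p - 1 + c) ^ 2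
        = (p * (p - 1 + c) + p * ((1 - u) * c) / u) / (p - 1 + c) ^ 2 := by
      congr 1
      rw [e2]
      have : p * x * (-(p * x ^ (p - 1)) * (1 / p) * (c / u))
          = -(p * ((x * x ^ (p - 1)) * c) / u) := by
        field_simp
      rw [this, e1]
      ring
    rw [hval] at hG
    have hD : HasDerivAt (fun y => G y - arcsinp p y)
        ((p * (p - 1 + c) + p * ((1 - u) * c) / u) / (p - 1 + c) ^ 2
          - (1 - x ^ p) ^ (-1 / p)) x := hG.sub hF
    rw [hD.deriv]
    -- now the algebraic inequality
    have hgc : (1 - x ^ p) ^ (-1 / p) = 1 / c := by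
      rw [← hu_def, neg_div, Real.rpow_neg hu0.le, ← hc_def, one_div]
    rw [hgc, sub_pos]
    have hucp : c ^ p = u := by
      rw [hc_def, one_div, Real.rpow_inv_rpow hu0.le hp0.ne']
    -- Bernoulli bound
    set q : ℝ := p - 2 with hq_def
    have hq : 0 ≤ q := by simp only [hq_def]; linarith
    set w : ℝ := c ^ (-q) with hw_def
    have hw : 1 + q * (1 - c) ≤ w := bern_neg hc0 hc1.le hq
    have hwu : w * u = c * c := by
      rw [hw_def, ← hucp, ← Real.rpow_add hc0, show -q + p = 2 by rw [hq_def]; ring,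
        Real.rpow_two, sq]
    rw [div_lt_div_iff₀ hc0 (pow_pos hd0 2)]
    have hrw : (p * (p - 1 + c) + p * ((1 - u) * c) / u)
        = (p * (p - 1 + c) * u + p * ((1 - u) * c)) / u := by
      field_simp
    rw [hrw, div_mul_eq_mul_div, lt_div_iff₀ hu0]
    have step1 : (p - 1 + c) ^ 2 < p * (p - 1 + c) * c + p * w - p * (c * c) := by
      nlinarith [mul_le_mul_of_nonneg_left hw hp0.le,
        mul_pos (show (0:ℝ) < 1 - c by linarith) hd0]
    calc 1 * (p - 1 + c) ^ 2 * u
        < (p * (p - 1 + c) * c + p * w - p * (c * c)) * u := by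
          nlinarith [mul_lt_mul_of_pos_right step1 hu0]
      _ = (p * (p - 1 + c) * u + p * ((1 - u) * c)) * c := by
          linear_combination p * hwu
  -- strict monotonicity of G - arcsinp
  have hmono : StrictMonoOn (fun y => G y - arcsinp p y) (Icc 0 1) :=
    strictMonoOn_of_deriv_pos (convex_Icc 0 1) hDcont hderiv
  have h0mem : (0:ℝ) ∈ Icc (0:ℝ) 1 := by constructor <;> norm_num
  have hsmem : s ∈ Icc (0:ℝ) 1 := ⟨hs.1.le, hs.2⟩
  have := hmono h0mem hsmem hs.1
  have hG0 : G 0 = 0 := by simp [hG_def]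
  have hF0 : arcsinp p 0 = 0 := intervalIntegral.integral_same
  simp only [hG0, hF0, sub_zero] at this
  linarith [this]

end Aux

theorem stmt15 (p : ℝ) (hp : 2 ≤ p) :
    ∀ x ∈ Set.Ioc 0 (pip p / 2),
      sinp p x / x > (p - 1 + cosp p x) / p ∧
      (p - 1 + cosp p x) / p ≥ (1 + cosp p x) / 2 := by
  have hp0 : (0:ℝ) < p := by linarith
  intro x hx
  obtain ⟨hx0, hx2⟩ := hx
  have hF0 : arcsinp p 0 = 0 := intervalIntegral.integral_same
  have hF1 : arcsinp p 1 = pip p / 2 := by rw [pip]; ring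
  have hsub : Icc (arcsinp p 0) (arcsinp p 1) ⊆ arcsinp p '' Icc 0 1 :=
    intermediate_value_Icc zero_le_one (arcsinp_contOn hp)
  have hex : ∃ a ∈ Icc (0:ℝ) 1, arcsinp p a = x := by
    have hmem : x ∈ Icc (arcsinp p 0) (arcsinp p 1) := by
      rw [hF0, hF1]; exact ⟨hx0.le, hx2⟩
    obtain ⟨a, ha, hfa⟩ := hsub hmem
    exact ⟨a, ha, hfa⟩
  have hsmem : sinp p x ∈ Icc (0:ℝ) 1 := by
    unfold sinp; exact Function.invFunOn_mem hex
  have hFs : arcsinp p (sinp p x) = x := by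
    unfold sinp; exact Function.invFunOn_eq hex
  set s : ℝ := sinp p x with hs_def
  have hs0 : 0 < s := by
    rcases eq_or_lt_of_le hsmem.1 with h | h
    · exfalso; rw [← h] at hFs; rw [hF0] at hFs; linarith
    · exact h
  have hs1 : s ≤ 1 := hsmem.2
  have hsp1 : s ^ p ≤ 1 := Real.rpow_le_one hsmem.1 hs1 hp0.le
  have hsp0 : 0 ≤ s ^ p := Real.rpow_nonneg hsmem.1 p
  have hcos : cosp p x = (1 - s ^ p) ^ (1 / p) := rfl
  set c : ℝ := (1 - s ^ p) ^ (1 / p) with hc_def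
  have hc0 : 0 ≤ c := Real.rpow_nonneg (by linarith) _
  have hc1 : c ≤ 1 := Real.rpow_le_one (by linarith) (by linarith)
    (one_div_nonneg.mpr hp0.le)
  have hd0 : 0 < p - 1 + c := by linarith
  have hkey : x < p * s / (p - 1 + c) := by
    rw [← hFs]; exact arcsinp_lt hp ⟨hs0, hs1⟩
  constructor
  · rw [gt_iff_lt, hcos, div_lt_div_iff₀ hp0 hx0]
    have h2 : x * (p - 1 + c) < p * s := (lt_div_iff₀ hd0).1 hkey
    nlinarith [h2]
  · rw [ge_iff_le, hcos, div_le_div_iff₀ (by norm_num : (0:ℝ) < 2) hp0]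
    nlinarith [mul_nonneg (by linarith : (0:ℝ) ≤ p - 2) (by linarith : (0:ℝ) ≤ 1 - c)]
end

section
/- Let p > 1. Then the function f(x) = sin_p(x)/x is strictly decreasing on (0, π_p/2), with f(x) → 1 as x → 0⁺ and f(x) → 2/π_p as x → (π_p/2)⁻. In particular, for all x ∈ (0, 1), x/arcsin_p(x) < sin_p(x)/x < (2x/π_p)/arcsin_p(2x/π_p). -/
open Real Set Filter Topology

namespace Stmt16Aux
open MeasureTheory

/-- The integrand of `arcsinp`. -/
noncomputable def F (p : ℝ) : ℝ → ℝ := fun t => (1 - t ^ p) ^ (-1 / p)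

lemma arcsinp_eq (p x : ℝ) : arcsinp p x = ∫ t in (0:ℝ)..x, F p t := rfl

lemma arcsinp_zero (p : ℝ) : arcsinp p 0 = 0 := intervalIntegral.integral_same

variable {p : ℝ} (hp : 1 < p)
include hp

lemma p_pos : 0 < p := lt_trans one_pos hp

lemma exp_neg : -1 / p < 0 := div_neg_of_neg_of_pos (by norm_num) (p_pos hp)

lemma rpow_lt_one' {t : ℝ} (h0 : 0 ≤ t) (h1 : t < 1) : t ^ p < 1 :=
  Real.rpow_lt_one h0 h1 (p_pos hp)

lemma F_pos {t : ℝ} (h0 : 0 ≤ t) (h1 : t < 1) : 0 < F p t :=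
  Real.rpow_pos_of_pos (by linarith [rpow_lt_one' hp h0 h1]) _

lemma one_lt_F {t : ℝ} (h0 : 0 < t) (h1 : t < 1) : 1 < F p t := by
  have h2 : t ^ p < 1 := rpow_lt_one' hp h0.le h1
  have h3 : 0 < t ^ p := Real.rpow_pos_of_pos h0 _
  calc (1:ℝ) = 1 ^ (-1/p) := (Real.one_rpow _).symm
    _ < (1 - t ^ p) ^ (-1/p) :=
      Real.rpow_lt_rpow_of_neg (by linarith) (by linarith) (exp_neg hp)

lemma F_lt_F {s t : ℝ} (h0 : 0 ≤ s) (hst : s < t) (h1 : t < 1) : F p s < F p t := by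
  have h2 : s ^ p < t ^ p := Real.rpow_lt_rpow h0 hst (p_pos hp)
  have h3 : t ^ p < 1 := rpow_lt_one' hp (h0.trans hst.le) h1
  exact Real.rpow_lt_rpow_of_neg (by linarith) (by linarith) (exp_neg hp)

lemma F_contAt {t : ℝ} (ht : |t| < 1) : ContinuousAt (F p) t := by
  have h1 : ContinuousAt (fun t : ℝ => t ^ p) t :=
    Real.continuousAt_rpow_const t p (Or.inr (p_pos hp).le)
  have h2 : |t ^ p| < 1 :=
    lt_of_le_of_lt (Real.abs_rpow_le_abs_rpow t p)
      (Real.rpow_lt_one (abs_nonneg t) ht (p_pos hp))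
  have h3 : (1 : ℝ) - t ^ p ≠ 0 := by
    have h4 := (abs_lt.1 h2).2
    intro h; rw [sub_eq_zero] at h; exact absurd h.symm (ne_of_lt h4)
  exact (continuousAt_const.sub h1).rpow_const (Or.inl h3)

lemma F_contOn : ContinuousOn (F p) (Ioo (-1 : ℝ) 1) := fun t ht =>
  (F_contAt hp (abs_lt.2 ⟨ht.1, ht.2⟩)).continuousWithinAt

lemma F_aesm : AEStronglyMeasurable (F p) (MeasureTheory.volume.restrict (Ioc (0:ℝ) 1)) := by
  rw [← MeasureTheory.Measure.restrict_congr_set MeasureTheory.Ioo_ae_eq_Ioc]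
  exact ((F_contOn hp).mono (fun t ht => ⟨by linarith [ht.1], ht.2⟩)).aestronglyMeasurable
    measurableSet_Ioo

lemma F_int : IntervalIntegrable (F p) MeasureTheory.volume 0 1 := by
  have h1 : 1 / p < 1 := by rw [div_lt_one (p_pos hp)]; exact hp
  have hexp : (-1:ℝ) < -1 / p := by rw [neg_div]; linarith
  have hdom0 : IntervalIntegrable (fun x : ℝ => x ^ (-1/p)) MeasureTheory.volume 1 0 :=
    intervalIntegral.intervalIntegrable_rpow' hexp
  have hdom : IntervalIntegrable (fun t : ℝ => (1 - t) ^ (-1/p)) MeasureTheory.volume 0 1 := by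
    have := hdom0.comp_sub_left 1
    simpa using this
  refine hdom.mono_fun' ?_ ?_
  · rw [uIoc_of_le (zero_le_one : (0:ℝ) ≤ 1)]; exact F_aesm hp
  · rw [uIoc_of_le (zero_le_one : (0:ℝ) ≤ 1), Filter.EventuallyLE,
      ae_restrict_iff' measurableSet_Ioc]
    refine Filter.Eventually.of_forall fun t ht => ?_
    rcases lt_or_eq_of_le ht.2 with h1t | h1t
    · have hFt : 0 ≤ F p t := (F_pos hp ht.1.le h1t).le
      have hle : F p t ≤ (1 - t) ^ (-1/p) := by
        have htp : t ^ p ≤ t := by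
          have := Real.rpow_le_rpow_of_exponent_ge ht.1 h1t.le hp.le
          rwa [Real.rpow_one] at this
        exact Real.rpow_le_rpow_of_nonpos (by linarith) (by linarith) (exp_neg hp).le
      rw [Real.norm_eq_abs, abs_of_nonneg hFt]
      exact hle
    · subst h1t
      have : F p 1 = 0 := by
        simp [F, Real.one_rpow, Real.zero_rpow (ne_of_lt (exp_neg hp))]
      rw [this]
      simp [Real.rpow_nonneg]

lemma F_int' {a b : ℝ} (ha : a ∈ Icc (0:ℝ) 1) (hb : b ∈ Icc (0:ℝ) 1) :
    IntervalIntegrable (F p) MeasureTheory.volume a b := by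
  apply (F_int hp).mono_set
  rw [uIcc_of_le (zero_le_one : (0:ℝ) ≤ 1)]
  exact uIcc_subset_Icc ha hb

lemma arcsinp_strictMonoOn : StrictMonoOn (arcsinp p) (Icc 0 1) := by
  intro a ha b hb hab
  have h1 : (∫ t in (0:ℝ)..a, F p t) + ∫ t in a..b, F p t = ∫ t in (0:ℝ)..b, F p t :=
    intervalIntegral.integral_add_adjacent_intervals
      (F_int' hp ⟨le_rfl, zero_le_one⟩ ha) (F_int' hp ha hb)
  have h2 : 0 < ∫ t in a..b, F p t :=
    intervalIntegral.intervalIntegral_pos_of_pos_on (F_int' hp ha hb)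
      (fun t ht => F_pos hp (ha.1.trans ht.1.le) (lt_of_lt_of_le ht.2 hb.2)) hab
  rw [arcsinp_eq, arcsinp_eq]
  linarith

lemma lt_arcsinp {x : ℝ} (h0 : 0 < x) (h1 : x ≤ 1) : x < arcsinp p x := by
  have hFi : IntervalIntegrable (F p) MeasureTheory.volume 0 x :=
    F_int' hp ⟨le_rfl, zero_le_one⟩ ⟨h0.le, h1⟩
  have hint : IntervalIntegrable (fun t => F p t - 1) MeasureTheory.volume 0 x :=
    hFi.sub intervalIntegrable_const
  have h2 : 0 < ∫ t in (0:ℝ)..x, (F p t - 1) :=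
    intervalIntegral.intervalIntegral_pos_of_pos_on hint
      (fun t ht => by linarith [one_lt_F hp ht.1 (lt_of_lt_of_le ht.2 h1)]) h0
  have h3 : ∫ t in (0:ℝ)..x, (F p t - 1) = arcsinp p x - x := by
    rw [intervalIntegral.integral_sub hFi intervalIntegrable_const,
      intervalIntegral.integral_const, arcsinp_eq]
    simp
  linarith [h3 ▸ h2]

lemma one_lt_A : 1 < arcsinp p 1 := lt_arcsinp hp one_pos le_rfl

lemma A_pos : 0 < arcsinp p 1 := lt_trans one_pos (one_lt_A hp)

lemma pip_half : pip p / 2 = arcsinp p 1 := by unfold pip; ring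

lemma ratio_eq {a : ℝ} (ha : 0 < a) (ha1 : a ≤ 1) :
    arcsinp p a / a = ∫ s in (0:ℝ)..1, F p (a * s) := by
  rw [intervalIntegral.integral_comp_mul_left (F p) ha.ne', mul_zero, mul_one,
    smul_eq_mul, ← arcsinp_eq, div_eq_inv_mul]

lemma int_comp {a : ℝ} (ha : 0 < a) (ha1 : a ≤ 1) :
    IntervalIntegrable (fun s => F p (a * s)) MeasureTheory.volume 0 1 := by
  have := (F_int' hp ⟨le_rfl, zero_le_one⟩ ⟨ha.le, ha1⟩).comp_mul_left (c := a)
  simpa [div_self ha.ne'] using this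

lemma ratio_strict {a b : ℝ} (ha : 0 < a) (hab : a < b) (hb1 : b ≤ 1) :
    arcsinp p a / a < arcsinp p b / b := by
  have hb0 : 0 < b := ha.trans hab
  rw [ratio_eq hp ha (hab.le.trans hb1), ratio_eq hp hb0 hb1]
  have hia := int_comp hp ha (hab.le.trans hb1)
  have hib := int_comp hp hb0 hb1
  have hpos : 0 < ∫ s in (0:ℝ)..1, (F p (b * s) - F p (a * s)) := by
    refine intervalIntegral.intervalIntegral_pos_of_pos_on (hib.sub hia) (fun s hs => ?_) one_pos
    have h1 : 0 ≤ a * s := mul_nonneg ha.le hs.1.le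
    have h2 : a * s < b * s := by nlinarith [hs.1]
    have h3 : b * s < 1 := by nlinarith [hs.1, hs.2]
    linarith [F_lt_F hp h1 h2 h3]
  rw [intervalIntegral.integral_sub hib hia] at hpos
  linarith

lemma arcsinp_lt_mul {y : ℝ} (h0 : 0 < y) (h1 : y < 1) :
    arcsinp p y < arcsinp p 1 * y := by
  have h := ratio_strict hp h0 h1 le_rfl
  rw [div_one] at h
  calc arcsinp p y = arcsinp p y / y * y := by field_simp
    _ < arcsinp p 1 * y := mul_lt_mul_of_pos_right h h0

lemma arcsinp_contOn : ContinuousOn (arcsinp p) (Icc 0 1) := by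
  have h := intervalIntegral.continuousOn_primitive_interval
    (μ := MeasureTheory.volume) (a := (0:ℝ)) (b := 1) (f := F p) ?_
  · rwa [uIcc_of_le (zero_le_one : (0:ℝ) ≤ 1)] at h
  · rw [uIcc_of_le (zero_le_one : (0:ℝ) ≤ 1),
      ← intervalIntegrable_iff_integrableOn_Icc_of_le zero_le_one]
    exact F_int hp

lemma exists_sinp {x : ℝ} (hx : x ∈ Icc 0 (arcsinp p 1)) :
    ∃ y ∈ Icc (0:ℝ) 1, arcsinp p y = x := by
  have h := intermediate_value_Icc (zero_le_one : (0:ℝ) ≤ 1) (arcsinp_contOn hp)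
  have hx' : x ∈ Icc (arcsinp p 0) (arcsinp p 1) := by rwa [arcsinp_zero]
  obtain ⟨y, hy, hxy⟩ := h hx'
  exact ⟨y, hy, hxy⟩

lemma sinp_mem {x : ℝ} (hx : x ∈ Icc 0 (arcsinp p 1)) : sinp p x ∈ Icc (0:ℝ) 1 :=
  Function.invFunOn_mem (exists_sinp hp hx)

lemma arcsinp_sinp {x : ℝ} (hx : x ∈ Icc 0 (arcsinp p 1)) : arcsinp p (sinp p x) = x :=
  Function.invFunOn_eq (exists_sinp hp hx)

lemma sinp_arcsinp {y : ℝ} (hy : y ∈ Icc (0:ℝ) 1) : sinp p (arcsinp p y) = y :=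
  (arcsinp_strictMonoOn hp).injOn.leftInvOn_invFunOn hy

lemma sinp_mem_Ioo {x : ℝ} (hx : x ∈ Ioo 0 (arcsinp p 1)) : sinp p x ∈ Ioo (0:ℝ) 1 := by
  have hx' : x ∈ Icc 0 (arcsinp p 1) := ⟨hx.1.le, hx.2.le⟩
  have hy := sinp_mem hp hx'
  have h0 : (0:ℝ) ∈ Icc (0:ℝ) 1 := ⟨le_rfl, zero_le_one⟩
  have h1 : (1:ℝ) ∈ Icc (0:ℝ) 1 := ⟨zero_le_one, le_rfl⟩
  constructor
  · refine ((arcsinp_strictMonoOn hp).lt_iff_lt h0 hy).mp ?_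
    rw [arcsinp_zero, arcsinp_sinp hp hx']
    exact hx.1
  · refine ((arcsinp_strictMonoOn hp).lt_iff_lt hy h1).mp ?_
    rw [arcsinp_sinp hp hx']
    exact hx.2

lemma sinp_lt_sinp {x x' : ℝ} (hx : x ∈ Icc 0 (arcsinp p 1))
    (hx' : x' ∈ Icc 0 (arcsinp p 1)) (h : x < x') : sinp p x < sinp p x' := by
  refine ((arcsinp_strictMonoOn hp).lt_iff_lt (sinp_mem hp hx) (sinp_mem hp hx')).mp ?_
  rwa [arcsinp_sinp hp hx, arcsinp_sinp hp hx']

lemma sinp_lt_self {x : ℝ} (hx : x ∈ Ioo 0 (arcsinp p 1)) : sinp p x < x := by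
  have hy := sinp_mem_Ioo hp hx
  have := lt_arcsinp hp hy.1 hy.2.le
  rwa [arcsinp_sinp hp ⟨hx.1.le, hx.2.le⟩] at this

lemma div_lt_sinp {x : ℝ} (hx : x ∈ Ioo 0 (arcsinp p 1)) :
    x / arcsinp p 1 < sinp p x := by
  have hy := sinp_mem_Ioo hp hx
  have h := arcsinp_lt_mul hp hy.1 hy.2
  rw [arcsinp_sinp hp ⟨hx.1.le, hx.2.le⟩] at h
  rw [div_lt_iff₀ (A_pos hp)]
  linarith

lemma strictAntiOn_main :
    StrictAntiOn (fun x => sinp p x / x) (Ioo 0 (arcsinp p 1)) := by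
  intro x hx x' hx' hlt
  simp only
  have hy := sinp_mem_Ioo hp hx
  have hy' := sinp_mem_Ioo hp hx'
  have hyy' : sinp p x < sinp p x' :=
    sinp_lt_sinp hp ⟨hx.1.le, hx.2.le⟩ ⟨hx'.1.le, hx'.2.le⟩ hlt
  have hr := ratio_strict hp hy.1 hyy' hy'.2.le
  rw [arcsinp_sinp hp ⟨hx.1.le, hx.2.le⟩, arcsinp_sinp hp ⟨hx'.1.le, hx'.2.le⟩] at hr
  rw [div_lt_div_iff₀ hy.1 hy'.1] at hr
  rw [div_lt_div_iff₀ hx'.1 hx.1]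
  nlinarith

end Stmt16Aux

open Stmt16Aux MeasureTheory in
theorem stmt16 (p : ℝ) (hp : 1 < p) :
    StrictAntiOn (fun x => sinp p x / x) (Set.Ioo 0 (pip p / 2)) ∧
    Tendsto (fun x => sinp p x / x) (𝓝[>] 0) (𝓝 1) ∧
    Tendsto (fun x => sinp p x / x) (𝓝[<] (pip p / 2)) (𝓝 (2 / pip p)) ∧
    ∀ x ∈ Set.Ioo (0:ℝ) 1,
      x / arcsinp p x < sinp p x / x ∧
      sinp p x / x < (2 * x / pip p) / arcsinp p (2 * x / pip p) := by
  set A := arcsinp p 1 with hA_def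
  have hA1 : 1 < A := one_lt_A hp
  have hA0 : 0 < A := A_pos hp
  have hpip : pip p / 2 = A := pip_half hp
  have hIooMem : Ioo (0:ℝ) A ∈ 𝓝[>] (0:ℝ) := Ioo_mem_nhdsGT_of_mem ⟨le_rfl, hA0⟩
  -- tendsto of sinp at 0
  have hsinp0' : Tendsto (sinp p) (𝓝[>] (0:ℝ)) (𝓝 0) := by
    refine tendsto_of_tendsto_of_tendsto_of_le_of_le'
      (tendsto_const_nhds (x := (0:ℝ)))
      (tendsto_id.mono_left nhdsWithin_le_nhds) ?_ ?_
    · filter_upwards [hIooMem] with x hx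
      exact (sinp_mem_Ioo hp hx).1.le
    · filter_upwards [hIooMem] with x hx
      exact (sinp_lt_self hp hx).le
  have hsinp0 : Tendsto (sinp p) (𝓝[>] (0:ℝ)) (𝓝[>] 0) := by
    rw [tendsto_nhdsWithin_iff]
    refine ⟨hsinp0', ?_⟩
    filter_upwards [hIooMem] with x hx
    exact (sinp_mem_Ioo hp hx).1
  -- derivative of arcsinp at 0
  have hderiv : HasDerivAt (arcsinp p) 1 0 := by
    have h0 : ContinuousAt (F p) 0 := F_contAt hp (by norm_num)
    have hF0 : F p 0 = 1 := by
      simp [F, Real.zero_rpow (p_pos hp).ne', Real.one_rpow]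
    have hsm : StronglyMeasurableAtFilter (F p) (𝓝 (0:ℝ)) volume :=
      ⟨Ioo (-1 : ℝ) 1, Ioo_mem_nhds (by norm_num) (by norm_num),
        (F_contOn hp).aestronglyMeasurable measurableSet_Ioo⟩
    have h := intervalIntegral.integral_hasDerivAt_right
      (F_int' hp ⟨le_rfl, zero_le_one⟩ ⟨le_rfl, zero_le_one⟩) hsm h0
    rw [hF0] at h
    exact h
  have hslope : Tendsto (fun y => arcsinp p y / y) (𝓝[>] (0:ℝ)) (𝓝 1) := by
    have h := hasDerivAt_iff_tendsto_slope.mp hderiv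
    have h2 : Tendsto (slope (arcsinp p) 0) (𝓝[>] (0:ℝ)) (𝓝 1) :=
      h.mono_left (nhdsWithin_mono 0 (fun y hy => ne_of_gt hy))
    refine h2.congr' ?_
    refine Filter.Eventually.of_forall fun y => ?_
    rw [slope_def_field, arcsinp_zero, sub_zero, sub_zero]
  have hG : Tendsto (fun y => y / arcsinp p y) (𝓝[>] (0:ℝ)) (𝓝 1) := by
    have h := hslope.inv₀ one_ne_zero
    rw [inv_one] at h
    refine h.congr fun y => ?_
    rw [inv_div]
  -- limit of sinp at A
  have hsinpA : Tendsto (sinp p) (𝓝[<] A) (𝓝 1) := by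
    rw [tendsto_order]
    constructor
    · intro a ha
      set c := max a 0 with hc_def
      have hc0 : 0 ≤ c := le_max_right a 0
      have hc1 : c < 1 := max_lt ha one_pos
      have hcm : c ∈ Icc (0:ℝ) 1 := ⟨hc0, hc1.le⟩
      have hlt : arcsinp p c < A :=
        arcsinp_strictMonoOn hp hcm ⟨zero_le_one, le_rfl⟩ hc1
      have hmem : Ioo (arcsinp p c) A ∈ 𝓝[<] A := Ioo_mem_nhdsLT_of_mem ⟨hlt, le_rfl⟩
      filter_upwards [hmem] with x hx
      have hc_nonneg : 0 ≤ arcsinp p c := by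
        have := (arcsinp_strictMonoOn hp).monotoneOn ⟨le_rfl, zero_le_one⟩ hcm hc0
        rwa [arcsinp_zero] at this
      have hx' : x ∈ Icc 0 A := ⟨hc_nonneg.trans hx.1.le, hx.2.le⟩
      have h2 : arcsinp p c < arcsinp p (sinp p x) := by
        rw [arcsinp_sinp hp hx']; exact hx.1
      have h3 : c < sinp p x :=
        ((arcsinp_strictMonoOn hp).lt_iff_lt hcm (sinp_mem hp hx')).mp h2
      exact lt_of_le_of_lt (le_max_left a 0) h3
    · intro b hb
      have hmem : Ioo (0:ℝ) A ∈ 𝓝[<] A := Ioo_mem_nhdsLT_of_mem ⟨hA0, le_rfl⟩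
      filter_upwards [hmem] with x hx
      exact lt_of_le_of_lt (sinp_mem hp ⟨hx.1.le, hx.2.le⟩).2 hb
  refine ⟨?_, ?_, ?_, ?_⟩
  · rw [hpip]
    exact strictAntiOn_main hp
  · have hcomp := hG.comp hsinp0
    refine hcomp.congr' ?_
    filter_upwards [hIooMem] with x hx
    show sinp p x / arcsinp p (sinp p x) = sinp p x / x
    rw [arcsinp_sinp hp ⟨hx.1.le, hx.2.le⟩]
  · rw [hpip]
    have htA : Tendsto (fun x => sinp p x / x) (𝓝[<] A) (𝓝 (1 / A)) :=
      hsinpA.div (tendsto_id.mono_left nhdsWithin_le_nhds) hA0.ne'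
    have heq : (2:ℝ) / pip p = 1 / A := by
      rw [show pip p = 2 * A from rfl, mul_comm]
      rw [div_eq_div_iff (by positivity) hA0.ne']
      ring
    rw [heq]
    exact htA
  · intro x hx
    have hx0 := hx.1
    have hx1 := hx.2
    have hxA : x ∈ Ioo 0 A := ⟨hx0, hx1.trans hA1⟩
    have hxIcc : x ∈ Icc (0:ℝ) 1 := ⟨hx0.le, hx1.le⟩
    constructor
    · -- x / arcsinp x < sinp x / x
      have hxlt : x < arcsinp p x := lt_arcsinp hp hx0 hx1.le
      have huA : arcsinp p x < A := arcsinp_strictMonoOn hp hxIcc ⟨zero_le_one, le_rfl⟩ hx1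
      have hu : arcsinp p x ∈ Ioo 0 A := ⟨hx0.trans hxlt, huA⟩
      have h := strictAntiOn_main hp hxA hu hxlt
      simpa [sinp_arcsinp hp hxIcc] using h
    · -- sinp x / x < (2x/pip) / arcsinp (2x/pip)
      have hveq : 2 * x / pip p = x / A := by
        rw [show pip p = 2 * A from rfl, mul_div_mul_left _ _ (two_ne_zero)]
      rw [hveq]
      have hv0 : 0 < x / A := div_pos hx0 hA0
      have hvx : x / A < x := div_lt_self hx0 hA1
      have hv1 : x / A < 1 := hvx.trans hx1
      have hvIcc : x / A ∈ Icc (0:ℝ) 1 := ⟨hv0.le, hv1.le⟩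
      have hw : arcsinp p (x / A) < x := by
        have := arcsinp_lt_mul hp hv0 hv1
        rwa [mul_div_cancel₀ x hA0.ne'] at this
      have hw0 : 0 < arcsinp p (x / A) := hv0.trans (lt_arcsinp hp hv0 hv1.le)
      have hwA : arcsinp p (x / A) ∈ Ioo 0 A := ⟨hw0, hw.trans (hx1.trans hA1)⟩
      have h := strictAntiOn_main hp hwA hxA hw
      simpa [sinp_arcsinp hp hvIcc] using h
end

section
/- Let p > 1. Then the function f(x) = sinh_p(x)/x is strictly increasing on (0, ∞), with f(x) → 1 as x → 0⁺ and f(x) → ∞ as x → ∞. In particular, for every k > 0, setting b = sinh_p(k)/k, one has x/arsinh_p(x) < sinh_p(x)/x < (b·x)/arsinh_p(b·x) for all x ∈ (0, k). -/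
open Real Set Filter Topology

namespace Stmt17Aux

open MeasureTheory NNReal

variable {p : ℝ}

noncomputable def phi (p t : ℝ) : ℝ := (1 + t ^ p) ^ (-1 / p)

variable {p : ℝ}

lemma arsinhp_eq (x : ℝ) : arsinhp p x = ∫ t in (0:ℝ)..x, phi p t := rfl

lemma base_pos (hp : 1 < p) {t : ℝ} (ht : 0 ≤ t) : 0 < 1 + t ^ p := by
  have := Real.rpow_nonneg ht p; linarith

lemma phi_pos (hp : 1 < p) {t : ℝ} (ht : 0 ≤ t) : 0 < phi p t :=
  Real.rpow_pos_of_pos (base_pos hp ht) _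

lemma phi_le_one (hp : 1 < p) {t : ℝ} (ht : 0 ≤ t) : phi p t ≤ 1 := by
  apply Real.rpow_le_one_of_one_le_of_nonpos
  · have := Real.rpow_nonneg ht p; linarith
  · have : (0:ℝ) < p := by linarith
    rw [neg_div]; simp [le_of_lt, this]

lemma phi_zero (hp : 1 < p) : phi p 0 = 1 := by
  have : (0:ℝ) ^ p = 0 := Real.zero_rpow (by positivity)
  simp [phi, this]

lemma phi_strictAnti (hp : 1 < p) : StrictAntiOn (phi p) (Ici 0) := by
  intro a ha b hb hab
  apply Real.rpow_lt_rpow_of_neg (base_pos hp ha)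
  · have := Real.rpow_lt_rpow ha hab (by linarith : (0:ℝ) < p); linarith
  · have : (0:ℝ) < p := by linarith
    rw [neg_div]; simp [this]

lemma phi_anti (hp : 1 < p) : AntitoneOn (phi p) (Ici 0) := (phi_strictAnti hp).antitoneOn

lemma phi_contOn (hp : 1 < p) : ContinuousOn (phi p) (Ici 0) := by
  intro t ht
  apply ContinuousAt.continuousWithinAt
  have h1 : ContinuousAt (fun t : ℝ => 1 + t ^ p) t :=
    continuousAt_const.add (Real.continuousAt_rpow_const t p (Or.inr (by linarith)))
  exact h1.rpow_const (Or.inl (ne_of_gt (base_pos hp ht)))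

lemma phi_intble (hp : 1 < p) {a b : ℝ} (ha : 0 ≤ a) (hb : 0 ≤ b) :
    IntervalIntegrable (phi p) MeasureTheory.volume a b := by
  apply ContinuousOn.intervalIntegrable
  exact (phi_contOn hp).mono (fun x hx => le_trans (le_min ha hb) hx.1)

lemma integral_le_const (hp : 1 < p) {a b C : ℝ} (h0 : 0 ≤ a) (hab : a ≤ b)
    (hC : ∀ t ∈ Icc a b, phi p t ≤ C) : ∫ t in a..b, phi p t ≤ (b - a) * C := by
  calc ∫ t in a..b, phi p t ≤ ∫ _t in a..b, C :=
        intervalIntegral.integral_mono_on hab (phi_intble hp h0 (h0.trans hab))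
          intervalIntegrable_const hC
    _ = (b - a) * C := by simp [smul_eq_mul]

lemma const_le_integral (hp : 1 < p) {a b C : ℝ} (h0 : 0 ≤ a) (hab : a ≤ b)
    (hC : ∀ t ∈ Icc a b, C ≤ phi p t) : (b - a) * C ≤ ∫ t in a..b, phi p t := by
  calc (b - a) * C = ∫ _t in a..b, C := by simp [smul_eq_mul]
    _ ≤ ∫ t in a..b, phi p t :=
        intervalIntegral.integral_mono_on hab intervalIntegrable_const
          (phi_intble hp h0 (h0.trans hab)) hC

lemma A_add (hp : 1 < p) {a b : ℝ} (ha : 0 ≤ a) (hb : 0 ≤ b) :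
    arsinhp p b = arsinhp p a + ∫ t in a..b, phi p t := by
  rw [arsinhp_eq, arsinhp_eq,
    intervalIntegral.integral_add_adjacent_intervals (phi_intble hp le_rfl ha)
      (phi_intble hp ha hb)]

lemma A_zero : arsinhp p 0 = 0 := by rw [arsinhp_eq, intervalIntegral.integral_same]

lemma A_le (hp : 1 < p) {x : ℝ} (hx : 0 ≤ x) : arsinhp p x ≤ x := by
  have := integral_le_const hp le_rfl hx (fun t ht => phi_le_one hp ht.1)
  rw [arsinhp_eq]; linarith

lemma A_lt (hp : 1 < p) {x : ℝ} (hx : 0 < x) : arsinhp p x < x := by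
  have h2 : (0:ℝ) ≤ x / 2 := by linarith
  have e := A_add hp h2 hx.le
  have h1 : arsinhp p (x/2) ≤ x/2 := A_le hp h2
  have h3 : ∫ t in (x/2)..x, phi p t ≤ (x - x/2) * phi p (x/2) :=
    integral_le_const hp h2 (by linarith)
      (fun t ht => phi_anti hp h2 (h2.trans ht.1) ht.1)
  have h4 : phi p (x/2) < 1 := by
    rw [← phi_zero hp]; exact phi_strictAnti hp (Set.mem_Ici.2 le_rfl) h2 (by linarith)
  nlinarith

lemma A_gt (hp : 1 < p) {x : ℝ} (hx : 0 < x) : x * phi p x < arsinhp p x := by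
  have h2 : (0:ℝ) ≤ x / 2 := by linarith
  have e := A_add hp h2 hx.le
  have h1 : (x/2 - 0) * phi p (x/2) ≤ arsinhp p (x/2) := by
    rw [arsinhp_eq]
    exact const_le_integral hp le_rfl h2 (fun t ht => phi_anti hp ht.1 h2 ht.2)
  have h3 : (x - x/2) * phi p x ≤ ∫ t in (x/2)..x, phi p t :=
    const_le_integral hp h2 (by linarith)
      (fun t ht => phi_anti hp (h2.trans ht.1) hx.le ht.2)
  have h4 : phi p x < phi p (x/2) := phi_strictAnti hp h2 hx.le (by linarith)
  nlinarith

lemma A_pos (hp : 1 < p) {x : ℝ} (hx : 0 < x) : 0 < arsinhp p x := by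
  have := A_gt hp hx
  nlinarith [phi_pos hp hx.le]

lemma A_nonneg (hp : 1 < p) {x : ℝ} (hx : 0 ≤ x) : 0 ≤ arsinhp p x := by
  rcases eq_or_lt_of_le hx with h | h
  · rw [← h, A_zero]
  · exact (A_pos hp h).le

lemma A_strictMono (hp : 1 < p) : StrictMonoOn (arsinhp p) (Ici 0) := by
  intro a ha b hb hab
  have e := A_add hp ha hb
  have h3 : (b - a) * phi p b ≤ ∫ t in a..b, phi p t :=
    const_le_integral hp ha hab.le (fun t ht => phi_anti hp (ha.trans ht.1) hb ht.2)
  nlinarith [phi_pos hp hb]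

lemma A_ratio (hp : 1 < p) {y₁ y₂ : ℝ} (h1 : 0 < y₁) (h12 : y₁ < y₂) :
    y₁ * arsinhp p y₂ < y₂ * arsinhp p y₁ := by
  have e := A_add hp h1.le (h1.trans h12).le
  have hub : ∫ t in y₁..y₂, phi p t ≤ (y₂ - y₁) * phi p y₁ :=
    integral_le_const hp h1.le h12.le (fun t ht => phi_anti hp h1.le (h1.le.trans ht.1) ht.1)
  have hlb := A_gt hp h1
  nlinarith [phi_pos hp h1.le]

lemma one_add_rpow_le (hp : 1 < p) {t : ℝ} (ht : 0 ≤ t) : 1 + t ^ p ≤ (1 + t) ^ p := by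
  have h := NNReal.add_rpow_le_rpow_add (1 : ℝ≥0) t.toNNReal (by linarith : 1 ≤ p)
  have h2 := NNReal.coe_le_coe.2 h
  push_cast [NNReal.coe_rpow, Real.coe_toNNReal t ht] at h2
  simpa using h2

lemma phi_ge_inv (hp : 1 < p) {t : ℝ} (ht : 0 ≤ t) : 1 / (1 + t) ≤ phi p t := by
  have hp0 : (0:ℝ) < p := by linarith
  have h1 : ((1 + t) ^ p) ^ (-1 / p) ≤ phi p t :=
    Real.rpow_le_rpow_of_nonpos (base_pos hp ht) (one_add_rpow_le hp ht)
      (by rw [neg_div]; simp [hp0.le])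
  have h2 : ((1 + t) ^ p) ^ (-1 / p) = (1 + t) ^ (p * (-1 / p)) :=
    (Real.rpow_mul (by linarith) _ _).symm
  have h3 : p * (-1 / p) = -1 := by field_simp
  rw [h2, h3, Real.rpow_neg_one] at h1
  rw [one_div]; exact h1

lemma A_ge_log (hp : 1 < p) {x : ℝ} (hx : 0 ≤ x) : Real.log (1 + x) ≤ arsinhp p x := by
  have hcont : ContinuousOn (fun t : ℝ => 1 / (1 + t)) (Icc 0 x) := by
    apply continuousOn_const.div (continuousOn_const.add continuousOn_id)
    intro t ht; have := ht.1; show 1 + t ≠ 0; positivity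
  have hderiv : ∀ t ∈ uIcc (0:ℝ) x, HasDerivAt (fun u => Real.log (1 + u)) (1 / (1 + t)) t := by
    intro t ht
    rw [uIcc_of_le hx] at ht
    have h1 : HasDerivAt (fun u : ℝ => 1 + u) 1 t := (hasDerivAt_id t).const_add 1
    have := h1.log (by have := ht.1; positivity)
    simpa using this
  have hint : IntervalIntegrable (fun t : ℝ => 1 / (1 + t)) volume 0 x := by
    apply ContinuousOn.intervalIntegrable
    rwa [uIcc_of_le hx]
  have heq : ∫ t in (0:ℝ)..x, 1 / (1 + t) = Real.log (1 + x) := by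
    rw [intervalIntegral.integral_eq_sub_of_hasDerivAt hderiv hint]
    simp
  rw [← heq, arsinhp_eq]
  apply intervalIntegral.integral_mono_on hx hint (phi_intble hp le_rfl hx)
  exact fun t ht => phi_ge_inv hp ht.1

lemma A_le_log (hp : 1 < p) {x : ℝ} (hx : 1 ≤ x) :
    arsinhp p x ≤ arsinhp p 1 + Real.log x := by
  have h0 : (0:ℝ) ≤ 1 := zero_le_one
  have e := A_add hp h0 (by linarith : (0:ℝ) ≤ x)
  have hpt : ∀ t ∈ Icc (1:ℝ) x, phi p t ≤ 1 / t := by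
    intro t ht
    have ht1 : (1:ℝ) ≤ t := ht.1
    have htp : 0 < t ^ p := Real.rpow_pos_of_pos (by linarith) _
    have h1 : phi p t ≤ (t ^ p) ^ (-1 / p) := by
      apply Real.rpow_le_rpow_of_nonpos htp (by linarith)
      rw [neg_div]; simp [(by linarith : (0:ℝ) < p).le]
    have h2 : (t ^ p) ^ (-1 / p) = t ^ (p * (-1 / p)) :=
      (Real.rpow_mul (by linarith) _ _).symm
    have h3 : p * (-1 / p) = -1 := by field_simp
    rw [h2, h3, Real.rpow_neg_one, ← one_div] at h1
    exact h1
  have hint : IntervalIntegrable (fun t : ℝ => 1 / t) volume 1 x := by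
    apply ContinuousOn.intervalIntegrable
    apply continuousOn_const.div continuousOn_id
    intro t ht
    rw [uIcc_of_le hx] at ht
    have := ht.1; positivity
  have hmono : ∫ t in (1:ℝ)..x, phi p t ≤ ∫ t in (1:ℝ)..x, 1 / t :=
    intervalIntegral.integral_mono_on hx (phi_intble hp h0 (by linarith)) hint hpt
  have heq : ∫ t in (1:ℝ)..x, 1 / t = Real.log x := by
    rw [integral_one_div]
    · simp
    · rw [uIcc_of_le hx]; intro h; exact absurd h.1 (by norm_num)
  linarith [heq ▸ hmono, e]

lemma A_surj (hp : 1 < p) {y : ℝ} (hy : 0 ≤ y) : ∃ x, 0 ≤ x ∧ arsinhp p x = y := by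
  set X := Real.exp y - 1 with hXdef
  have hX : 0 ≤ X := by have := Real.one_le_exp hy; simp [hXdef]; linarith
  have hyX : y ≤ arsinhp p X := by
    have h := A_ge_log hp hX
    rwa [show 1 + X = Real.exp y by simp [hXdef], Real.log_exp] at h
  have hcont : ContinuousOn (arsinhp p) (Icc 0 X) := by
    have hi : IntegrableOn (phi p) (uIcc 0 X) volume := by
      rw [uIcc_of_le hX]
      exact ((phi_contOn hp).mono (fun t ht => ht.1)).integrableOn_Icc
    have h2 := intervalIntegral.continuousOn_primitive_interval hi
    rw [uIcc_of_le hX] at h2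
    exact h2
  obtain ⟨x, hx, hxy⟩ := intermediate_value_Icc hX hcont ⟨by rw [A_zero]; exact hy, hyX⟩
  exact ⟨x, hx.1, hxy⟩

lemma S_nonneg (hp : 1 < p) {y : ℝ} (hy : 0 ≤ y) : 0 ≤ sinhp p y := by
  obtain ⟨x, hx, hxy⟩ := A_surj hp hy
  exact Function.invFunOn_mem (f := arsinhp p) (s := Ici 0) ⟨x, hx, hxy⟩

lemma A_S (hp : 1 < p) {y : ℝ} (hy : 0 ≤ y) : arsinhp p (sinhp p y) = y := by
  obtain ⟨x, hx, hxy⟩ := A_surj hp hy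
  exact Function.invFunOn_eq (f := arsinhp p) (s := Ici 0) ⟨x, hx, hxy⟩

lemma S_A (hp : 1 < p) {x : ℝ} (hx : 0 ≤ x) : sinhp p (arsinhp p x) = x := by
  have hAx : (0:ℝ) ≤ arsinhp p x := A_nonneg hp hx
  exact (A_strictMono hp).injOn (S_nonneg hp hAx) hx (A_S hp hAx)

lemma S_pos (hp : 1 < p) {y : ℝ} (hy : 0 < y) : 0 < sinhp p y := by
  rcases eq_or_lt_of_le (S_nonneg hp hy.le) with h | h
  · exfalso
    have := A_S hp hy.le
    rw [← h, A_zero] at this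
    linarith
  · exact h

lemma S_strictMono (hp : 1 < p) : StrictMonoOn (sinhp p) (Ici 0) := by
  intro a ha b hb hab
  by_contra h
  push_neg at h
  have := (A_strictMono hp).monotoneOn (S_nonneg hp hb) (S_nonneg hp ha) h
  rw [A_S hp ha, A_S hp hb] at this
  linarith

lemma S_gt (hp : 1 < p) {x : ℝ} (hx : 0 < x) : x < sinhp p x := by
  have h1 := A_lt hp hx
  have h2 := S_strictMono hp (A_nonneg hp hx.le) (Set.mem_Ici.2 hx.le) h1
  rwa [S_A hp hx.le] at h2

lemma S_ge (hp : 1 < p) {y : ℝ} (hy : 0 ≤ y) : y ≤ sinhp p y := by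
  conv_lhs => rw [← A_S hp hy]
  exact A_le hp (S_nonneg hp hy)

lemma S_lt_exp (hp : 1 < p) {y : ℝ} (hy : 0 ≤ y) : sinhp p y ≤ Real.exp y - 1 := by
  have h := A_ge_log hp (S_nonneg hp hy)
  rw [A_S hp hy] at h
  have := Real.add_one_le_exp (Real.log (1 + sinhp p y))
  rw [Real.exp_log (by have := S_nonneg hp hy; linarith)] at this
  have h2 : Real.log (1 + sinhp p y) ≤ y := h
  have h3 := Real.exp_le_exp.2 h2
  rw [Real.exp_log (by have := S_nonneg hp hy; linarith)] at h3
  linarith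

lemma ratio_strictMono (hp : 1 < p) :
    StrictMonoOn (fun u => u / arsinhp p u) (Ioi 0) := by
  intro a ha b hb hab
  rw [Set.mem_Ioi] at ha hb
  simp only [div_lt_div_iff₀ (A_pos hp ha) (A_pos hp hb)]
  exact A_ratio hp ha hab

lemma Adiv_tendsto (hp : 1 < p) :
    Tendsto (fun u => arsinhp p u / u) (𝓝[>] 0) (𝓝 1) := by
  apply tendsto_of_tendsto_of_tendsto_of_le_of_le' (g := phi p) (h := fun _ => (1:ℝ))
  · have h := (phi_contOn hp 0 (Set.mem_Ici.2 le_rfl)).tendsto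
    rw [phi_zero hp] at h
    exact h.mono_left (nhdsWithin_mono 0 Ioi_subset_Ici_self)
  · exact tendsto_const_nhds
  · filter_upwards [eventually_mem_nhdsWithin] with u hu
    rw [Set.mem_Ioi] at hu
    rw [le_div_iff₀ hu]
    have := A_gt hp hu
    nlinarith
  · filter_upwards [eventually_mem_nhdsWithin] with u hu
    rw [Set.mem_Ioi] at hu
    rw [div_le_one hu]
    exact A_le hp hu.le

lemma invratio_tendsto_one (hp : 1 < p) :
    Tendsto (fun u => u / arsinhp p u) (𝓝[>] 0) (𝓝 1) := by
  have h := (Adiv_tendsto hp).inv₀ one_ne_zero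
  simpa only [inv_div, inv_one] using h

lemma S_tendsto_zero (hp : 1 < p) : Tendsto (sinhp p) (𝓝[>] 0) (𝓝[>] 0) := by
  rw [tendsto_nhdsWithin_iff]
  constructor
  · apply tendsto_of_tendsto_of_tendsto_of_le_of_le' (g := fun _ => (0:ℝ))
      (h := fun y => Real.exp y - 1)
    · exact tendsto_const_nhds
    · have : Tendsto (fun y : ℝ => Real.exp y - 1) (𝓝 0) (𝓝 0) := by
        have := (Real.continuous_exp.tendsto 0).sub tendsto_const_nhds (g := fun _ => (1:ℝ))
        simpa using this
      exact this.mono_left nhdsWithin_le_nhds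
    · filter_upwards [eventually_mem_nhdsWithin] with y hy
      exact S_nonneg hp (le_of_lt hy)
    · filter_upwards [eventually_mem_nhdsWithin] with y hy
      exact S_lt_exp hp (le_of_lt hy)
  · filter_upwards [eventually_mem_nhdsWithin] with y hy
    exact Set.mem_Ioi.2 (S_pos hp hy)

lemma lim_one (hp : 1 < p) :
    Tendsto (fun x => sinhp p x / x) (𝓝[>] 0) (𝓝 1) := by
  have hcomp := (invratio_tendsto_one hp).comp (S_tendsto_zero hp)
  apply hcomp.congr'
  filter_upwards [eventually_mem_nhdsWithin] with x hx
  simp only [Function.comp_apply, A_S hp (le_of_lt hx)]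

lemma S_tendsto_atTop (hp : 1 < p) : Tendsto (sinhp p) atTop atTop := by
  apply tendsto_atTop_mono' atTop _ tendsto_id
  filter_upwards [eventually_ge_atTop (0:ℝ)] with y hy
  exact S_ge hp hy

lemma ratio_tendsto_atTop (hp : 1 < p) :
    Tendsto (fun u => u / arsinhp p u) atTop atTop := by
  set C := arsinhp p 1 with hC
  have hCpos : 0 < C := A_pos hp one_pos
  have hg : Tendsto (fun u => (C + Real.log u) / u) atTop (𝓝 0) := by
    have h1 : Tendsto (fun u : ℝ => C / u) atTop (𝓝 0) :=
      tendsto_const_nhds.div_atTop tendsto_id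
    have h2 : Tendsto (fun u : ℝ => Real.log u / u) atTop (𝓝 0) :=
      Real.isLittleO_log_id_atTop.tendsto_div_nhds_zero
    have := h1.add h2
    simpa [add_div] using this
  have hgpos : ∀ᶠ u in atTop, (C + Real.log u) / u ∈ Ioi (0:ℝ) := by
    filter_upwards [eventually_ge_atTop (1:ℝ)] with u hu
    have hlog : 0 ≤ Real.log u := Real.log_nonneg hu
    have : (0:ℝ) < u := by linarith
    exact Set.mem_Ioi.2 (by positivity)
  have hginv : Tendsto (fun u => u / (C + Real.log u)) atTop atTop := by
    have h := (tendsto_nhdsWithin_iff.2 ⟨hg, hgpos⟩).inv_tendsto_nhdsGT_zero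
    have heq : (fun u => (C + Real.log u) / u)⁻¹ = fun u => u / (C + Real.log u) := by
      funext u; simp [Pi.inv_apply, inv_div]
    rwa [heq] at h
  apply tendsto_atTop_mono' atTop _ hginv
  filter_upwards [eventually_ge_atTop (1:ℝ)] with u hu
  have hA : arsinhp p u ≤ C + Real.log u := A_le_log hp hu
  have hApos : 0 < arsinhp p u := A_pos hp (by linarith)
  have hu0 : (0:ℝ) ≤ u := by linarith
  gcongr

lemma lim_atTop (hp : 1 < p) :
    Tendsto (fun x => sinhp p x / x) atTop atTop := by
  have hcomp := (ratio_tendsto_atTop hp).comp (S_tendsto_atTop hp)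
  apply hcomp.congr'
  filter_upwards [eventually_ge_atTop (0:ℝ)] with x hx
  simp only [Function.comp_apply, A_S hp hx]

lemma main_mono (hp : 1 < p) : StrictMonoOn (fun x => sinhp p x / x) (Set.Ioi 0) := by
  intro a ha b hb hab
  rw [Set.mem_Ioi] at ha hb
  have h := ratio_strictMono hp (Set.mem_Ioi.2 (S_pos hp ha)) (Set.mem_Ioi.2 (S_pos hp hb))
    (S_strictMono hp (Set.mem_Ici.2 ha.le) (Set.mem_Ici.2 hb.le) hab)
  simp only [A_S hp ha.le, A_S hp hb.le] at h
  exact h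


end Stmt17Aux

theorem stmt17 (p : ℝ) (hp : 1 < p) :
    StrictMonoOn (fun x => sinhp p x / x) (Set.Ioi 0) ∧
    Tendsto (fun x => sinhp p x / x) (𝓝[>] 0) (𝓝 1) ∧
    Tendsto (fun x => sinhp p x / x) atTop atTop ∧
    ∀ k > (0:ℝ), ∀ x ∈ Set.Ioo 0 k,
      x / arsinhp p x < sinhp p x / x ∧
      sinhp p x / x < (sinhp p k / k) * x / arsinhp p ((sinhp p k / k) * x) := by
  refine ⟨Stmt17Aux.main_mono hp, Stmt17Aux.lim_one hp, Stmt17Aux.lim_atTop hp, ?_⟩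
  intro k hk x hx
  obtain ⟨hx0, hxk⟩ := hx
  constructor
  · have h := Stmt17Aux.ratio_strictMono hp (Set.mem_Ioi.2 hx0)
      (Set.mem_Ioi.2 (Stmt17Aux.S_pos hp hx0)) (Stmt17Aux.S_gt hp hx0)
    simpa only [Stmt17Aux.A_S hp hx0.le] using h
  · have hfb : sinhp p x / x < sinhp p k / k :=
      Stmt17Aux.main_mono hp (Set.mem_Ioi.2 hx0) (Set.mem_Ioi.2 (hx0.trans hxk)) hxk
    have hSx : sinhp p x < sinhp p k / k * x := (div_lt_iff₀ hx0).1 hfb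
    have hbx : 0 < sinhp p k / k * x := by
      have := Stmt17Aux.S_pos hp (hx0.trans hxk)
      have hk' : 0 < k := hx0.trans hxk
      positivity
    have h := Stmt17Aux.ratio_strictMono hp (Set.mem_Ioi.2 (Stmt17Aux.S_pos hp hx0))
      (Set.mem_Ioi.2 hbx) hSx
    simpa only [Stmt17Aux.A_S hp hx0.le] using h
end

section
/- Let p > 1 and x > 0. Then the function f₃(t) = sinh_p(x/t)^t is strictly decreasing on (0, ∞), and log f₃ is concave on (0, ∞). -/
open Real Set Filter Topology

open scoped NNReal

namespace Stmt18Aux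

variable {p : ℝ}

/-- integrand -/
noncomputable def g (p t : ℝ) : ℝ := (1 + t ^ p) ^ (-1 / p)

lemma base_pos (hp : 1 < p) {t : ℝ} (ht : -1 < t) : 0 < 1 + t ^ p := by
  rcases le_or_gt 0 t with h | h
  · have : (0:ℝ) ≤ t ^ p := Real.rpow_nonneg h p
    linarith
  · have h1 : |t| < 1 := by rw [abs_of_neg h]; linarith
    have h2 : |t ^ p| ≤ |t| ^ p := Real.abs_rpow_le_abs_rpow t p
    have h3 : |t| ^ p < 1 := Real.rpow_lt_one (abs_nonneg t) h1 (by linarith)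
    have h4 : -|t ^ p| ≤ t ^ p := neg_abs_le _
    linarith

lemma g_pos (hp : 1 < p) {t : ℝ} (ht : -1 < t) : 0 < g p t :=
  Real.rpow_pos_of_pos (base_pos hp ht) _

lemma g_contAt (hp : 1 < p) {t : ℝ} (ht : -1 < t) : ContinuousAt (g p) t := by
  have h1 : ContinuousAt (fun t : ℝ => 1 + t ^ p) t :=
    continuousAt_const.add (Real.continuousAt_rpow_const t p (Or.inr (by linarith)))
  exact h1.rpow_const (Or.inl (base_pos hp ht).ne')

lemma one_add_rpow_le (hp : 1 < p) {t : ℝ} (ht : 0 ≤ t) : 1 + t ^ p ≤ (1 + t) ^ p := by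
  have := NNReal.add_rpow_le_rpow_add 1 t.toNNReal hp.le
  have h1 : ((1 : ℝ≥0) : ℝ) = 1 := rfl
  have h2 : ((t.toNNReal : ℝ≥0) : ℝ) = t := Real.coe_toNNReal t ht
  calc 1 + t ^ p = (((1 : ℝ≥0) ^ p + t.toNNReal ^ p : ℝ≥0) : ℝ) := by
        push_cast [NNReal.coe_rpow, h2]; rw [Real.one_rpow]
    _ ≤ ((((1 : ℝ≥0) + t.toNNReal) ^ p : ℝ≥0) : ℝ) := by exact_mod_cast this
    _ = (1 + t) ^ p := by rw [NNReal.coe_rpow]; push_cast [h2]; ring_nf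

lemma g_ge (hp : 1 < p) {t : ℝ} (ht : 0 ≤ t) : (1 + t)⁻¹ ≤ g p t := by
  have h0 : (0:ℝ) < 1 + t := by linarith
  have h1 : 0 < 1 + t ^ p := base_pos hp (by linarith)
  have h2 : 1 + t ^ p ≤ (1 + t) ^ p := one_add_rpow_le hp ht
  have h3 : ((1 + t) ^ p) ^ (-1 / p) ≤ g p t :=
    Real.rpow_le_rpow_of_nonpos h1 h2 (by
      apply div_nonpos_of_nonpos_of_nonneg <;> linarith)
  have h4 : ((1 + t) ^ p) ^ (-1 / p) = (1 + t)⁻¹ := by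
    rw [← Real.rpow_mul h0.le]
    rw [show p * (-1 / p) = -1 by field_simp]
    exact Real.rpow_neg_one _
  linarith

lemma g_le_inv (hp : 1 < p) {t : ℝ} (ht : 0 < t) : g p t ≤ t⁻¹ := by
  have h1 : 0 < t ^ p := Real.rpow_pos_of_pos ht p
  have h2 : t ^ p ≤ 1 + t ^ p := by linarith
  have h3 : g p t ≤ (t ^ p) ^ (-1 / p) :=
    Real.rpow_le_rpow_of_nonpos h1 h2 (by
      apply div_nonpos_of_nonpos_of_nonneg <;> linarith)
  have h4 : (t ^ p) ^ (-1 / p) = t⁻¹ := by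
    rw [← Real.rpow_mul ht.le, show p * (-1 / p) = -1 by field_simp]
    exact Real.rpow_neg_one _
  linarith

lemma I_hasDerivAt (hp : 1 < p) {y : ℝ} (hy : 0 ≤ y) :
    HasDerivAt (arsinhp p) (g p y) y := by
  have hco : ContinuousOn (g p) (Ioi (-1)) :=
    fun t ht => (g_contAt hp ht).continuousWithinAt
  have : HasDerivAt (fun u => ∫ t in (0:ℝ)..u, g p t) (g p y) y := by
    apply intervalIntegral.integral_hasDerivAt_right
    · apply ContinuousOn.intervalIntegrable
      apply hco.mono
      rw [uIcc_of_le hy]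
      intro t htt
      exact lt_of_lt_of_le (by norm_num) htt.1
    · exact hco.stronglyMeasurableAtFilter isOpen_Ioi y (by simpa using (by linarith : (-1:ℝ) < y))
    · exact g_contAt hp (by linarith)
  exact this

lemma I_zero : arsinhp p 0 = 0 := intervalIntegral.integral_same

lemma I_contOn (hp : 1 < p) : ContinuousOn (arsinhp p) (Ici 0) :=
  fun y hy => ((I_hasDerivAt hp hy).continuousAt).continuousWithinAt

lemma I_strictMono (hp : 1 < p) : StrictMonoOn (arsinhp p) (Ici 0) := by
  apply strictMonoOn_of_deriv_pos (convex_Ici 0) (I_contOn hp)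
  intro y hy
  rw [interior_Ici] at hy
  have hy' : (0:ℝ) < y := hy
  rw [(I_hasDerivAt hp hy'.le).deriv]
  exact g_pos hp (by linarith)

lemma I_ge_log (hp : 1 < p) {y : ℝ} (hy : 0 ≤ y) :
    Real.log (1 + y) ≤ arsinhp p y := by
  have key : MonotoneOn (fun y => arsinhp p y - Real.log (1 + y)) (Ici 0) := by
    have hder : ∀ y : ℝ, 0 ≤ y →
        HasDerivAt (fun y => arsinhp p y - Real.log (1 + y)) (g p y - (1 + y)⁻¹) y := by
      intro y hy
      have h1 : HasDerivAt (fun y : ℝ => 1 + y) 1 y := (hasDerivAt_id y).const_add 1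
      have h2 : HasDerivAt (fun y : ℝ => Real.log (1 + y)) (1 / (1 + y)) y :=
        h1.log (by positivity)
      have := (I_hasDerivAt hp hy).sub h2
      rw [one_div] at this; exact this
    apply monotoneOn_of_deriv_nonneg (convex_Ici 0)
    · exact fun z hz => ((hder z hz).continuousAt).continuousWithinAt
    · intro z hz
      rw [interior_Ici] at hz
      exact ((hder z (le_of_lt hz)).differentiableAt).differentiableWithinAt
    · intro z hz
      rw [interior_Ici] at hz
      rw [(hder z (le_of_lt hz)).deriv]
      have := g_ge hp (le_of_lt hz)
      linarith
  have h0 := key (self_mem_Ici) hy hy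
  simp only [I_zero, add_zero, Real.log_one, sub_zero] at h0
  linarith [h0]

lemma I_le_log (hp : 1 < p) {y : ℝ} (hy : 1 ≤ y) :
    arsinhp p y ≤ arsinhp p 1 + Real.log y := by
  have key : MonotoneOn (fun y => arsinhp p 1 + Real.log y - arsinhp p y) (Ici 1) := by
    have hder : ∀ y : ℝ, 0 < y →
        HasDerivAt (fun y => arsinhp p 1 + Real.log y - arsinhp p y) (y⁻¹ - g p y) y := by
      intro y hy
      have h2 : HasDerivAt (fun y : ℝ => arsinhp p 1 + Real.log y) (y⁻¹) y :=
        ((Real.hasDerivAt_log hy.ne').const_add (arsinhp p 1))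
      exact h2.sub (I_hasDerivAt hp hy.le)
    apply monotoneOn_of_deriv_nonneg (convex_Ici 1)
    · exact fun z hz => ((hder z (by exact lt_of_lt_of_le one_pos hz)).continuousAt).continuousWithinAt
    · intro z hz
      rw [interior_Ici] at hz
      exact ((hder z (by linarith [mem_Ioi.mp hz])).differentiableAt).differentiableWithinAt
    · intro z hz
      rw [interior_Ici] at hz
      have hz1 : (1:ℝ) < z := hz
      rw [(hder z (by linarith)).deriv]
      have := g_le_inv hp (show (0:ℝ) < z by linarith)
      linarith
  have h0 := key (self_mem_Ici) hy hy
  simp only [Real.log_one, add_zero, sub_self] at h0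
  linarith [h0]

lemma I_surj (hp : 1 < p) {b : ℝ} (hb : 0 ≤ b) : ∃ y, 0 ≤ y ∧ arsinhp p y = b := by
  set N := Real.exp b with hN
  have hN0 : (0:ℝ) < N := Real.exp_pos b
  have hIN : b ≤ arsinhp p N := by
    have h1 : Real.log (1 + N) ≤ arsinhp p N := I_ge_log hp hN0.le
    have h2 : b = Real.log N := (Real.log_exp b).symm
    have h3 : Real.log N ≤ Real.log (1 + N) :=
      Real.log_le_log hN0 (by linarith)
    linarith
  have hmem : b ∈ Icc (arsinhp p 0) (arsinhp p N) := by
    rw [I_zero]; exact ⟨hb, hIN⟩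
  have := intermediate_value_Icc hN0.le ((I_contOn hp).mono (fun t ht => ht.1))
  obtain ⟨y, hy, hyb⟩ := this hmem
  exact ⟨y, hy.1, hyb⟩

lemma s_rightInv (hp : 1 < p) {b : ℝ} (hb : 0 ≤ b) :
    arsinhp p (sinhp p b) = b ∧ sinhp p b ∈ Ici 0 := by
  obtain ⟨y, hy0, hyb⟩ := I_surj hp hb
  have hex : ∃ a ∈ Ici (0:ℝ), arsinhp p a = b := ⟨y, hy0, hyb⟩
  exact ⟨Function.invFunOn_eq hex, Function.invFunOn_mem hex⟩

lemma s_nonneg (hp : 1 < p) {b : ℝ} (hb : 0 ≤ b) : 0 ≤ sinhp p b :=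
  (s_rightInv hp hb).2

lemma s_I (hp : 1 < p) {b : ℝ} (hb : 0 ≤ b) : arsinhp p (sinhp p b) = b :=
  (s_rightInv hp hb).1

lemma s_strictMono (hp : 1 < p) : StrictMonoOn (sinhp p) (Ici 0) := by
  intro a ha b hb hab
  by_contra hle
  push_neg at hle
  have h1 : arsinhp p (sinhp p b) ≤ arsinhp p (sinhp p a) :=
    (I_strictMono hp).monotoneOn (s_nonneg hp hb) (s_nonneg hp ha) hle
  rw [s_I hp ha, s_I hp hb] at h1
  exact absurd h1 (not_le.mpr hab)

lemma s_zero (hp : 1 < p) : sinhp p 0 = 0 := by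
  have h := s_I hp (le_refl 0)
  have h0 : sinhp p 0 ∈ Ici (0:ℝ) := s_rightInv hp (le_refl 0) |>.2
  by_contra hne
  have hpos : 0 < sinhp p 0 := lt_of_le_of_ne h0 (Ne.symm hne)
  have := (I_strictMono hp) self_mem_Ici h0 hpos
  rw [I_zero, h] at this
  exact lt_irrefl 0 this

lemma s_pos (hp : 1 < p) {b : ℝ} (hb : 0 < b) : 0 < sinhp p b := by
  have := s_strictMono hp self_mem_Ici (mem_Ici.mpr hb.le) hb
  rwa [s_zero hp] at this

lemma s_of_I (hp : 1 < p) {a : ℝ} (ha : 0 ≤ a) : sinhp p (arsinhp p a) = a := by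
  have ha' : arsinhp p a ∈ Ici (0:ℝ) := by
    rw [mem_Ici, ← I_zero (p := p)]
    exact (I_strictMono hp).monotoneOn self_mem_Ici ha ha
  have h1 : arsinhp p (sinhp p (arsinhp p a)) = arsinhp p a := s_I hp ha'
  exact (I_strictMono hp).injOn (s_nonneg hp ha') ha h1

lemma s_contAt (hp : 1 < p) {y : ℝ} (hy : 0 < y) : ContinuousAt (sinhp p) y := by
  rw [Metric.continuousAt_iff]
  intro ε hε
  set σ := sinhp p y with hσdef
  have hσ : 0 < σ := s_pos hp hy
  set ε' := min (ε / 2) (σ / 2) with hε'def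
  have hε'1 : ε' ≤ ε / 2 := min_le_left _ _
  have hε'2 : ε' ≤ σ / 2 := min_le_right _ _
  have hε' : 0 < ε' := lt_min (by linarith) (by linarith)
  have hσε : (0:ℝ) ≤ σ - ε' := by linarith
  set a := arsinhp p (σ - ε') with hadef
  set b := arsinhp p (σ + ε') with hbdef
  have hIσ : arsinhp p σ = y := s_I hp hy.le
  have hya : a < y := by
    rw [← hIσ]
    exact I_strictMono hp hσε (by positivity : (0:ℝ) ≤ σ) (by linarith)
  have hyb : y < b := by
    rw [← hIσ]
    exact I_strictMono hp hσ.le (by linarith : (0:ℝ) ≤ σ + ε') (by linarith)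
  have ha0 : 0 ≤ a := by
    rw [hadef, ← I_zero (p := p)]
    exact (I_strictMono hp).monotoneOn self_mem_Ici hσε hσε
  refine ⟨min (y - a) (b - y), lt_min (by linarith) (by linarith), ?_⟩
  intro z hz
  rw [Real.dist_eq] at hz ⊢
  have hz1 := abs_lt.mp (lt_of_lt_of_le hz (min_le_left _ _))
  have hz2 := abs_lt.mp (lt_of_lt_of_le hz (min_le_right _ _))
  have hza : a < z := by linarith
  have hzb : z < b := by linarith
  have hz0 : 0 ≤ z := le_trans ha0 hza.le
  have h1 : σ - ε' < sinhp p z := by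
    by_contra hle
    push_neg at hle
    have := (I_strictMono hp).monotoneOn (s_nonneg hp hz0) hσε hle
    rw [s_I hp hz0] at this
    exact absurd this (not_le.mpr hza)
  have h2 : sinhp p z < σ + ε' := by
    by_contra hle
    push_neg at hle
    have := (I_strictMono hp).monotoneOn (by linarith : (0:ℝ) ≤ σ + ε')
      (s_nonneg hp hz0) hle
    rw [s_I hp hz0] at this
    exact absurd this (not_le.mpr hzb)
  rw [abs_lt]
  constructor <;> [skip; skip] <;> simp only [hσdef] at h1 h2 ⊢ <;> linarith

lemma s_hasDerivAt (hp : 1 < p) {y : ℝ} (hy : 0 < y) :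
    HasDerivAt (sinhp p) ((1 + (sinhp p y) ^ p) ^ (1 / p)) y := by
  have hσ : 0 < sinhp p y := s_pos hp hy
  have hd : HasDerivAt (arsinhp p) (g p (sinhp p y)) (sinhp p y) := I_hasDerivAt hp hσ.le
  have hne : g p (sinhp p y) ≠ 0 := (g_pos hp (by linarith)).ne'
  have hev : ∀ᶠ z in 𝓝 y, arsinhp p (sinhp p z) = z := by
    filter_upwards [Ioi_mem_nhds hy] with z hz
    exact s_I hp (le_of_lt hz)
  have h := HasDerivAt.of_local_left_inverse (s_contAt hp hy) hd hne hev
  have hbase : 0 < 1 + (sinhp p y) ^ p := base_pos hp (by linarith)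
  have heq : (g p (sinhp p y))⁻¹ = (1 + (sinhp p y) ^ p) ^ (1 / p) := by
    rw [g, show (-1 / p : ℝ) = -(1 / p) by ring, Real.rpow_neg hbase.le, inv_inv]
  rwa [heq] at h

/-- derivative of log ∘ sinhp -/
noncomputable def G (p y : ℝ) : ℝ := (1 + (sinhp p y) ^ (-p)) ^ (1 / p)

lemma logs_hasDerivAt (hp : 1 < p) {y : ℝ} (hy : 0 < y) :
    HasDerivAt (fun y => Real.log (sinhp p y)) (G p y) y := by
  have hσ : 0 < sinhp p y := s_pos hp hy
  have h := (s_hasDerivAt hp hy).log hσ.ne'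
  have hσp : 0 < (sinhp p y) ^ p := Real.rpow_pos_of_pos hσ p
  have hbase : 0 < 1 + (sinhp p y) ^ p := by linarith
  have heq : (1 + (sinhp p y) ^ p) ^ (1 / p) / sinhp p y = G p y := by
    rw [G]
    have h1 : (1 : ℝ) + (sinhp p y) ^ (-p) = (1 + (sinhp p y) ^ p) / (sinhp p y) ^ p := by
      rw [Real.rpow_neg hσ.le]
      field_simp
      ring
    rw [h1, Real.div_rpow hbase.le hσp.le]
    have h2 : ((sinhp p y) ^ p) ^ (1 / p) = sinhp p y := by
      rw [← Real.rpow_mul hσ.le, show p * (1 / p) = 1 by field_simp, Real.rpow_one]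
    rw [h2]
  rwa [heq] at h

lemma G_strictAnti (hp : 1 < p) : StrictAntiOn (G p) (Ioi 0) := by
  intro y1 hy1 y2 hy2 h12
  have hσ1 : 0 < sinhp p y1 := s_pos hp hy1
  have hσ2 : 0 < sinhp p y2 := s_pos hp hy2
  have hlt : sinhp p y1 < sinhp p y2 :=
    s_strictMono hp (mem_Ici.mpr (le_of_lt (mem_Ioi.mp hy1))) (mem_Ici.mpr (le_of_lt (mem_Ioi.mp hy2))) h12
  have h1 : (sinhp p y2) ^ (-p) < (sinhp p y1) ^ (-p) :=
    Real.rpow_lt_rpow_of_neg hσ1 hlt (by linarith)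
  have h2 : (0:ℝ) ≤ 1 + (sinhp p y2) ^ (-p) := by
    have := Real.rpow_pos_of_pos hσ2 (-p); linarith
  exact Real.rpow_lt_rpow h2 (by linarith) (by positivity)

/-- derivative of t ↦ t log sinhp (x/t) -/
noncomputable def h (p u : ℝ) : ℝ := Real.log (sinhp p u) - u * G p u

lemma h_strictMono (hp : 1 < p) : StrictMonoOn (h p) (Ioi 0) := by
  intro u1 hu1 u2 hu2 h12
  have hu1' : (0:ℝ) < u1 := hu1
  have hu2' : (0:ℝ) < u2 := hu2
  obtain ⟨c, hc, hceq⟩ := exists_hasDerivAt_eq_slope (fun u => Real.log (sinhp p u)) (G p)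
    h12
    (fun u hu => ((logs_hasDerivAt hp (lt_of_lt_of_le hu1' hu.1)).continuousAt).continuousWithinAt)
    (fun u hu => logs_hasDerivAt hp (lt_trans hu1' hu.1))
  have hGc : G p u2 < G p c := G_strictAnti hp (mem_Ioi.mpr (lt_trans hu1' hc.1)) hu2 hc.2
  have hG12 : G p u2 < G p u1 := G_strictAnti hp hu1 hu2 h12
  have hslope : Real.log (sinhp p u2) - Real.log (sinhp p u1) = G p c * (u2 - u1) := by
    rw [eq_div_iff (show u2 - u1 ≠ 0 from sub_ne_zero_of_ne h12.ne')] at hceq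
    linarith [hceq]
  have hkey : G p u2 * (u2 - u1) < Real.log (sinhp p u2) - Real.log (sinhp p u1) := by
    rw [hslope]
    exact mul_lt_mul_of_pos_right hGc (by linarith)
  have hmul := mul_lt_mul_of_pos_left hG12 hu1'
  show Real.log (sinhp p u1) - u1 * G p u1 < Real.log (sinhp p u2) - u2 * G p u2
  nlinarith

/-- F t = t * log (sinhp p (x/t)) -/
noncomputable def F (p x t : ℝ) : ℝ := t * Real.log (sinhp p (x / t))

lemma F_hasDerivAt (hp : 1 < p) {x t : ℝ} (hx : 0 < x) (ht : 0 < t) :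
    HasDerivAt (F p x) (h p (x / t)) t := by
  have hu : 0 < x / t := div_pos hx ht
  have hdiv : HasDerivAt (fun t : ℝ => x / t) (-x / t ^ 2) t := by
    have h1 := (hasDerivAt_inv ht.ne').const_mul x
    simp only [div_eq_mul_inv]
    rw [show -x * (t ^ 2)⁻¹ = x * -(t ^ 2)⁻¹ by ring]
    exact h1
  have hcomp : HasDerivAt (fun t : ℝ => Real.log (sinhp p (x / t)))
      (G p (x / t) * (-x / t ^ 2)) t :=
    (logs_hasDerivAt hp hu).comp t hdiv
  have hprod := (hasDerivAt_id t).mul hcomp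
  have heq : 1 * Real.log (sinhp p (x / t)) + t * (G p (x / t) * (-x / t ^ 2)) = h p (x / t) := by
    show _ = Real.log (sinhp p (x / t)) - (x / t) * G p (x / t)
    have h3 : t * (G p (x / t) * (-x / t ^ 2)) = -((x / t) * G p (x / t)) := by
      field_simp
    rw [h3]
    ring
  rw [← heq]
  exact hprod

lemma F_strictConcave (hp : 1 < p) {x : ℝ} (hx : 0 < x) :
    StrictConcaveOn ℝ (Ioi 0) (F p x) := by
  apply StrictAntiOn.strictConcaveOn_of_deriv (convex_Ioi 0)
  · exact fun t ht => ((F_hasDerivAt hp hx (mem_Ioi.mp ht)).continuousAt).continuousWithinAt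
  · rw [interior_Ioi]
    intro t1 ht1 t2 ht2 h12
    have h1 : (0:ℝ) < t1 := ht1
    have h2 : (0:ℝ) < t2 := ht2
    rw [(F_hasDerivAt hp hx h1).deriv, (F_hasDerivAt hp hx h2).deriv]
    apply h_strictMono hp (mem_Ioi.mpr (div_pos hx h2)) (mem_Ioi.mpr (div_pos hx h1))
    exact div_lt_div_of_pos_left hx h1 h12

lemma F_lt (hp : 1 < p) {x t : ℝ} (hx : 0 < x) (ht : 0 < t) : F p x t < x := by
  have hu : 0 < x / t := div_pos hx ht
  have hσ : 0 < sinhp p (x / t) := s_pos hp hu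
  have h1 : Real.log (1 + sinhp p (x / t)) ≤ arsinhp p (sinhp p (x / t)) :=
    I_ge_log hp hσ.le
  rw [s_I hp hu.le] at h1
  have h2 : Real.log (sinhp p (x / t)) < Real.log (1 + sinhp p (x / t)) :=
    Real.log_lt_log hσ (by linarith)
  have h3 : Real.log (sinhp p (x / t)) < x / t := by linarith
  calc F p x t = t * Real.log (sinhp p (x / t)) := rfl
    _ < t * (x / t) := by exact mul_lt_mul_of_pos_left h3 ht
    _ = x := by field_simp

lemma F_ge (hp : 1 < p) {x t : ℝ} (hx : 0 < x) (ht : 0 < t)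
    (htu : x / t ≥ arsinhp p 1) :
    x - arsinhp p 1 * t ≤ F p x t := by
  set u₀ := arsinhp p 1 with hu₀def
  have hu : 0 < x / t := div_pos hx ht
  have hu₀0 : 0 ≤ u₀ := by
    rw [hu₀def, ← I_zero (p := p)]
    exact (I_strictMono hp).monotoneOn self_mem_Ici (by norm_num) (by norm_num)
  have hσ1 : (1:ℝ) ≤ sinhp p (x / t) := by
    have := (s_strictMono hp).monotoneOn (mem_Ici.mpr hu₀0) (mem_Ici.mpr hu.le) htu
    rwa [s_of_I hp (by norm_num : (0:ℝ) ≤ 1)] at this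
  have h1 : arsinhp p (sinhp p (x / t)) ≤ u₀ + Real.log (sinhp p (x / t)) :=
    I_le_log hp hσ1
  rw [s_I hp hu.le] at h1
  have h2 : x / t - u₀ ≤ Real.log (sinhp p (x / t)) := by linarith
  have h3 : t * (x / t - u₀) ≤ t * Real.log (sinhp p (x / t)) :=
    mul_le_mul_of_nonneg_left h2 ht.le
  have h4 : t * (x / t - u₀) = x - u₀ * t := by field_simp
  calc x - u₀ * t = t * (x / t - u₀) := h4.symm
    _ ≤ F p x t := h3

lemma F_strictAnti (hp : 1 < p) {x : ℝ} (hx : 0 < x) :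
    StrictAntiOn (F p x) (Ioi 0) := by
  intro t1 ht1 t2 ht2 h12
  have ht1' : (0:ℝ) < t1 := ht1
  have ht2' : (0:ℝ) < t2 := ht2
  by_contra hle
  push_neg at hle
  -- hle : F p x t1 ≤ F p x t2
  have hconc := F_strictConcave hp hx
  -- Step A: ∀ t ∈ Ioo 0 t1, F p x t < F p x t1
  have stepA : ∀ t : ℝ, 0 < t → t < t1 → F p x t < F p x t1 := by
    intro t ht htt1
    set lam := (t2 - t1) / (t2 - t) with hlam
    set mu := (t1 - t) / (t2 - t) with hmu
    have hden : (0:ℝ) < t2 - t := by linarith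
    have hlampos : 0 < lam := div_pos (by linarith) hden
    have hmupos : 0 < mu := div_pos (by linarith) hden
    have hsum : lam + mu = 1 := by
      rw [hlam, hmu]
      field_simp
      ring
    have hcomb : lam • t + mu • t2 = t1 := by
      simp only [smul_eq_mul, hlam, hmu]
      field_simp
      ring
    have := hconc.2 (mem_Ioi.mpr ht) ht2 (show t ≠ t2 by intro hh; rw [hh] at htt1; linarith)
      hlampos hmupos hsum
    rw [hcomb] at this
    simp only [smul_eq_mul] at this
    -- this : lam * F t + mu * F t2 < F t1
    by_contra hge
    push_neg at hge
    have hA : lam * F p x t1 ≤ lam * F p x t := mul_le_mul_of_nonneg_left hge hlampos.le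
    have hB : mu * F p x t1 ≤ mu * F p x t2 := mul_le_mul_of_nonneg_left hle hmupos.le
    have hC : lam * F p x t1 + mu * F p x t1 = F p x t1 := by
      rw [← add_mul, hsum, one_mul]
    linarith
  -- Step B
  set u₀ := arsinhp p 1 with hu₀def
  have hu₀ : 0 < u₀ := by
    rw [hu₀def, ← I_zero (p := p)]
    exact I_strictMono hp self_mem_Ici (by norm_num) one_pos
  have hd : 0 < x - F p x t1 := by linarith [F_lt hp hx ht1']
  set d := x - F p x t1 with hddef
  set t := min (min (t1 / 2) (x / u₀)) (d / (2 * u₀)) with htdef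
  have ht0 : 0 < t := by
    apply lt_min (lt_min (by linarith) (div_pos hx hu₀)) (div_pos hd (by linarith))
  have htt1 : t < t1 := by
    have := min_le_left (min (t1 / 2) (x / u₀)) (d / (2 * u₀))
    have := min_le_left (t1 / 2) (x / u₀)
    calc t ≤ min (t1 / 2) (x / u₀) := min_le_left _ _
      _ ≤ t1 / 2 := min_le_left _ _
      _ < t1 := by linarith
  have htx : t ≤ x / u₀ := le_trans (min_le_left _ _) (min_le_right _ _)
  have htd : t ≤ d / (2 * u₀) := min_le_right _ _
  have htu : x / t ≥ u₀ := by
    rw [ge_iff_le, le_div_iff₀ ht0]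
    have := (le_div_iff₀ hu₀).mp htx
    linarith
  have hF1 : x - u₀ * t ≤ F p x t := F_ge hp hx ht0 htu
  have hF2 : F p x t < F p x t1 := stepA t ht0 htt1
  have hu₀t : u₀ * t ≤ d / 2 := by
    have := mul_le_mul_of_nonneg_left htd hu₀.le
    calc u₀ * t ≤ u₀ * (d / (2 * u₀)) := this
      _ = d / 2 := by field_simp
  linarith

end Stmt18Aux

theorem stmt18 (p : ℝ) (hp : 1 < p) (x : ℝ) (hx : 0 < x) :
    StrictAntiOn (fun t => sinhp p (x / t) ^ t) (Set.Ioi 0) ∧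
    ConcaveOn ℝ (Set.Ioi 0) (fun t => Real.log (sinhp p (x / t) ^ t)) := by
  have hspos : ∀ t : ℝ, t ∈ Set.Ioi (0:ℝ) → 0 < sinhp p (x / t) := fun t ht =>
    Stmt18Aux.s_pos hp (div_pos hx (mem_Ioi.mp ht))
  constructor
  · intro a ha b hb hab
    have hF := Stmt18Aux.F_strictAnti hp hx ha hb hab
    simp only
    rw [Real.rpow_def_of_pos (hspos a ha), Real.rpow_def_of_pos (hspos b hb)]
    apply Real.exp_lt_exp.mpr
    have : Stmt18Aux.F p x b < Stmt18Aux.F p x a := hF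
    simp only [Stmt18Aux.F] at this
    linarith [this, mul_comm b (Real.log (sinhp p (x / b))),
      mul_comm a (Real.log (sinhp p (x / a)))]
  · have hc := (Stmt18Aux.F_strictConcave hp hx).concaveOn
    refine ⟨convex_Ioi 0, ?_⟩
    intro a ha b hb mu nu hmu hnu hmunu
    have hm : mu • a + nu • b ∈ Set.Ioi (0:ℝ) := (convex_Ioi 0) ha hb hmu hnu hmunu
    have e : ∀ t : ℝ, t ∈ Set.Ioi (0:ℝ) →
        Real.log (sinhp p (x / t) ^ t) = Stmt18Aux.F p x t := fun t ht => by
      rw [Real.log_rpow (hspos t ht)]; rfl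
    simp only
    rw [e a ha, e b hb, e _ hm]
    exact hc.2 ha hb hmu hnu hmunu
end

section
/- Let p > 1 and x > 0. Then the function f₄(t) = cosh_p(x/t)^t is strictly decreasing on (0, ∞), and log f₄ is convex on (0, ∞). -/
open Real Set Filter Topology

namespace Stmt19Aux

open MeasureTheory

variable {p : ℝ}

lemma hp0 (hp : 1 < p) : 0 < p := lt_trans one_pos hp

lemma one_add_pos (hp : 1 < p) {t : ℝ} (ht : 0 ≤ t) : 0 < 1 + t ^ p := by
  have := Real.rpow_nonneg ht p; linarith

lemma phi_pos (hp : 1 < p) {t : ℝ} (ht : 0 ≤ t) : 0 < (1 + t ^ p) ^ (-1 / p) :=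
  Real.rpow_pos_of_pos (one_add_pos hp ht) _

lemma phi_le_one (hp : 1 < p) {t : ℝ} (ht : 0 ≤ t) : (1 + t ^ p) ^ (-1 / p) ≤ 1 :=
  Real.rpow_le_one_of_one_le_of_nonpos
    (by have := Real.rpow_nonneg ht p; linarith)
    (div_nonpos_of_nonpos_of_nonneg (by norm_num) (hp0 hp).le)

lemma phi_contOn (hp : 1 < p) :
    ContinuousOn (fun t : ℝ => (1 + t ^ p) ^ (-1 / p)) (Ici 0) := by
  have h1 : ContinuousOn (fun t : ℝ => 1 + t ^ p) (Ici 0) :=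
    continuousOn_const.add (continuousOn_id.rpow_const fun t _ => Or.inr (hp0 hp).le)
  exact h1.rpow_const fun t ht => Or.inl (one_add_pos hp ht).ne'

lemma phi_intble (hp : 1 < p) {a b : ℝ} (ha : 0 ≤ a) (hb : 0 ≤ b) :
    IntervalIntegrable (fun t : ℝ => (1 + t ^ p) ^ (-1 / p)) volume a b :=
  ((phi_contOn hp).mono fun x hx => le_trans (le_inf ha hb) hx.1).intervalIntegrable

lemma arsinhp_zero : arsinhp p 0 = 0 := intervalIntegral.integral_same

lemma arsinhp_sub (hp : 1 < p) {a b : ℝ} (ha : 0 ≤ a) (hb : 0 ≤ b) :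
    arsinhp p b - arsinhp p a = ∫ t in a..b, (1 + t ^ p) ^ (-1 / p) := by
  have h := intervalIntegral.integral_add_adjacent_intervals
    (phi_intble hp le_rfl ha) (phi_intble hp ha hb)
  unfold arsinhp; linarith

lemma arsinhp_strictMonoOn (hp : 1 < p) : StrictMonoOn (arsinhp p) (Ici 0) := by
  intro a ha b hb hab
  have key := arsinhp_sub hp ha (le_trans ha hab.le)
  have pos : 0 < ∫ t in a..b, (1 + t ^ p) ^ (-1 / p) :=
    intervalIntegral.intervalIntegral_pos_of_pos_on (phi_intble hp ha (le_trans ha hab.le))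
      (fun t ht => phi_pos hp (le_trans ha ht.1.le)) hab
  linarith

lemma arsinhp_contOn (hp : 1 < p) : ContinuousOn (arsinhp p) (Ici 0) := by
  have : LipschitzOnWith 1 (arsinhp p) (Ici 0) := by
    apply LipschitzOnWith.of_dist_le_mul
    intro a ha b hb
    rw [Real.dist_eq, Real.dist_eq, NNReal.coe_one, one_mul]
    have key := arsinhp_sub hp (mem_Ici.1 hb) (mem_Ici.1 ha)
    have hb1 : |arsinhp p a - arsinhp p b| ≤ 1 * |a - b| := by
      rw [key]
      have := intervalIntegral.norm_integral_le_of_norm_le_const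
        (C := 1) (f := fun t : ℝ => (1 + t ^ p) ^ (-1 / p)) (a := b) (b := a) ?_
      · simpa [Real.norm_eq_abs, abs_sub_comm a b] using this
      · intro t ht
        have ht0 : 0 ≤ t := le_trans (le_inf (mem_Ici.1 hb) (mem_Ici.1 ha)) (le_of_lt ht.1)
        rw [Real.norm_eq_abs, abs_of_pos (phi_pos hp ht0)]
        exact phi_le_one hp ht0
    linarith [abs_nonneg (a-b)]
  exact this.continuousOn

lemma arsinhp_nonneg (hp : 1 < p) {a : ℝ} (ha : 0 ≤ a) : 0 ≤ arsinhp p a := by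
  rcases eq_or_lt_of_le ha with h | h
  · rw [← h, arsinhp_zero]
  · have := arsinhp_strictMonoOn hp self_mem_Ici ha h
    rw [arsinhp_zero] at this; exact this.le

lemma arsinhp_tendsto (hp : 1 < p) : Tendsto (arsinhp p) atTop atTop := by
  have key : ∀ x, 1 ≤ x → (2:ℝ)^(-1/p) * Real.log x + arsinhp p 1 ≤ arsinhp p x := by
    intro x hx
    have h1 : arsinhp p x - arsinhp p 1 = ∫ t in (1:ℝ)..x, (1 + t ^ p) ^ (-1/p) :=
      arsinhp_sub hp zero_le_one (le_trans zero_le_one hx)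
    have hle : ∀ t ∈ Icc (1:ℝ) x, (2:ℝ)^(-1/p) * t⁻¹ ≤ (1 + t ^ p) ^ (-1/p) := by
      intro t ht
      have ht0 : 0 < t := lt_of_lt_of_le one_pos ht.1
      have htp : 0 < t ^ p := Real.rpow_pos_of_pos ht0 p
      have h3 : 1 + t ^ p ≤ 2 * t ^ p := by
        have := Real.one_le_rpow ht.1 (hp0 hp).le; linarith
      have h4 : ((2:ℝ) * t ^ p) ^ (-1/p) ≤ (1 + t ^ p) ^ (-1/p) :=
        Real.rpow_le_rpow_of_nonpos (one_add_pos hp ht0.le) h3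
          (div_nonpos_of_nonpos_of_nonneg (by norm_num) (hp0 hp).le)
      have h5 : ((2:ℝ) * t ^ p) ^ (-1/p) = (2:ℝ)^(-1/p) * t⁻¹ := by
        rw [Real.mul_rpow (by norm_num) htp.le, ← Real.rpow_mul ht0.le,
          show p * (-1/p) = -1 by field_simp, Real.rpow_neg_one]
      rw [← h5]; exact h4
    have h2 : ∫ t in (1:ℝ)..x, (2:ℝ)^(-1/p) * t⁻¹ ≤ ∫ t in (1:ℝ)..x, (1+t^p)^(-1/p) := by
      apply intervalIntegral.integral_mono_on hx
      · refine (intervalIntegral.intervalIntegrable_inv (f := fun t : ℝ => t) ?_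
          continuousOn_id).const_mul _
        intro t ht
        have h7 : (1:ℝ) ⊓ x = 1 := inf_eq_left.2 hx
        have : (1:ℝ) ≤ t := by rw [← h7]; exact ht.1
        positivity
      · exact phi_intble hp zero_le_one (le_trans zero_le_one hx)
      · exact hle
    have h6 : ∫ t in (1:ℝ)..x, (2:ℝ)^(-1/p) * t⁻¹ = (2:ℝ)^(-1/p) * Real.log x := by
      rw [intervalIntegral.integral_const_mul, integral_inv_of_pos one_pos
        (lt_of_lt_of_le one_pos hx), div_one]
    linarith
  have hpos : (0:ℝ) < (2:ℝ)^(-1/p) := Real.rpow_pos_of_pos two_pos _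
  have htend : Tendsto (fun x => (2:ℝ)^(-1/p) * Real.log x + arsinhp p 1) atTop atTop :=
    ((Real.tendsto_log_atTop.const_mul_atTop hpos).atTop_add tendsto_const_nhds)
  exact tendsto_atTop_mono' atTop
    ((eventually_ge_atTop 1).mono fun x hx => key x hx) htend

lemma arsinhp_surjOn (hp : 1 < p) : SurjOn (arsinhp p) (Ici 0) (Ici 0) := by
  intro y hy
  obtain ⟨x, hxy, hx0⟩ :=
    (((arsinhp_tendsto hp).eventually_ge_atTop y).and (eventually_ge_atTop 0)).exists
  have h := intermediate_value_Icc hx0 ((arsinhp_contOn hp).mono Icc_subset_Ici_self)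
  have hy2 : y ∈ Icc (arsinhp p 0) (arsinhp p x) := by
    rw [arsinhp_zero]; exact ⟨mem_Ici.1 hy, hxy⟩
  exact (image_mono Icc_subset_Ici_self) (h hy2)

lemma sinhp_mem (hp : 1 < p) {y : ℝ} (hy : 0 ≤ y) : 0 ≤ sinhp p y :=
  Function.invFunOn_mem (arsinhp_surjOn hp hy)

lemma arsinhp_sinhp (hp : 1 < p) {y : ℝ} (hy : 0 ≤ y) : arsinhp p (sinhp p y) = y :=
  Function.invFunOn_eq (arsinhp_surjOn hp hy)

lemma sinhp_arsinhp (hp : 1 < p) {a : ℝ} (ha : 0 ≤ a) : sinhp p (arsinhp p a) = a :=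
  (arsinhp_strictMonoOn hp).injOn.leftInvOn_invFunOn ha

lemma sinhp_zero (hp : 1 < p) : sinhp p 0 = 0 := by
  have := sinhp_arsinhp hp (le_refl (0:ℝ))
  rwa [arsinhp_zero] at this

lemma sinhp_strictMonoOn (hp : 1 < p) : StrictMonoOn (sinhp p) (Ici 0) := by
  intro a ha b hb hab
  by_contra h
  push_neg at h
  have := (arsinhp_strictMonoOn hp).monotoneOn (sinhp_mem hp hb) (sinhp_mem hp ha) h
  rw [arsinhp_sinhp hp ha, arsinhp_sinhp hp hb] at this
  exact absurd this (not_le.2 hab)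

lemma sinhp_pos (hp : 1 < p) {y : ℝ} (hy : 0 < y) : 0 < sinhp p y := by
  have := sinhp_strictMonoOn hp self_mem_Ici hy.le hy
  rwa [sinhp_zero hp] at this

noncomputable def Atil (p : ℝ) : ℝ → ℝ := fun x => arsinhp p (max x 0) + min x 0

lemma Atil_of_nonneg {x : ℝ} (hx : 0 ≤ x) : Atil p x = arsinhp p x := by
  rw [Atil, max_eq_left hx, min_eq_right hx, add_zero]

lemma Atil_of_nonpos {x : ℝ} (hx : x ≤ 0) : Atil p x = x := by
  rw [Atil, max_eq_right hx, min_eq_left hx, arsinhp_zero, zero_add]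

lemma Atil_strictMono (hp : 1 < p) : StrictMono (Atil p) := by
  intro a b hab
  rcases le_total b 0 with hb | hb
  · rw [Atil_of_nonpos (hab.le.trans hb), Atil_of_nonpos hb]; exact hab
  · rcases le_total a 0 with ha | ha
    · rw [Atil_of_nonpos ha, Atil_of_nonneg hb]
      rcases lt_or_eq_of_le ha with ha' | ha'
      · exact lt_of_lt_of_le ha' (arsinhp_nonneg hp hb)
      · subst ha'
        have hb' : 0 < b := hab
        have := arsinhp_strictMonoOn hp self_mem_Ici hb'.le hb'
        rwa [arsinhp_zero] at this
    · rw [Atil_of_nonneg ha, Atil_of_nonneg hb]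
      exact arsinhp_strictMonoOn hp ha hb hab

lemma Atil_continuous (hp : 1 < p) : Continuous (Atil p) := by
  apply Continuous.add
  · exact (arsinhp_contOn hp).comp_continuous
      (continuous_id.max continuous_const) (fun x => le_max_right x 0)
  · exact continuous_id.min continuous_const

lemma Atil_surjective (hp : 1 < p) : Function.Surjective (Atil p) := by
  apply (Atil_continuous hp).surjective
  · apply Tendsto.congr' _ (arsinhp_tendsto hp)
    filter_upwards [eventually_ge_atTop (0:ℝ)] with x hx
    exact (Atil_of_nonneg hx).symm
  · apply Tendsto.congr' _ tendsto_id
    filter_upwards [eventually_le_atBot (0:ℝ)] with x hx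
    exact (Atil_of_nonpos hx).symm

noncomputable def AtilIso (p : ℝ) (hp : 1 < p) : ℝ ≃o ℝ :=
  StrictMono.orderIsoOfSurjective _ (Atil_strictMono hp) (Atil_surjective hp)

lemma sinhp_eq_symm (hp : 1 < p) {y : ℝ} (hy : 0 ≤ y) :
    sinhp p y = (AtilIso p hp).symm y := by
  apply (Atil_strictMono hp).injective
  have h1 : Atil p ((AtilIso p hp).symm y) = y := (AtilIso p hp).apply_symm_apply y
  rw [h1, Atil_of_nonneg (sinhp_mem hp hy), arsinhp_sinhp hp hy]

lemma sinhp_contOn (hp : 1 < p) : ContinuousOn (sinhp p) (Ici 0) := by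
  have hc : Continuous ((AtilIso p hp).symm : ℝ → ℝ) := OrderIso.continuous _
  exact hc.continuousOn.congr fun y hy => sinhp_eq_symm hp hy

lemma arsinhp_hasDeriv (hp : 1 < p) {y : ℝ} (hy : 0 < y) :
    HasDerivAt (arsinhp p) ((1 + y ^ p) ^ (-1 / p)) y := by
  apply intervalIntegral.integral_hasDerivAt_right (phi_intble hp le_rfl hy.le)
  · exact ContinuousOn.stronglyMeasurableAtFilter isOpen_Ioi
      ((phi_contOn hp).mono Ioi_subset_Ici_self) y hy
  · exact (phi_contOn hp).continuousAt (mem_of_superset (Ioi_mem_nhds hy) Ioi_subset_Ici_self)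

lemma coshp_pos (hp : 1 < p) {y : ℝ} (hy : 0 ≤ y) : 0 < coshp p y :=
  Real.rpow_pos_of_pos (one_add_pos hp (sinhp_mem hp hy)) _

lemma sinhp_hasDeriv (hp : 1 < p) {y : ℝ} (hy : 0 < y) :
    HasDerivAt (sinhp p) (coshp p y) y := by
  have hS : 0 < sinhp p y := sinhp_pos hp hy
  have hg : ContinuousAt (sinhp p) y :=
    (sinhp_contOn hp).continuousAt (mem_of_superset (Ioi_mem_nhds hy) Ioi_subset_Ici_self)
  have hA := arsinhp_hasDeriv hp hS
  have hfg : ∀ᶠ z in 𝓝 y, arsinhp p (sinhp p z) = z := by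
    filter_upwards [Ioi_mem_nhds hy] with z hz
    exact arsinhp_sinhp hp (le_of_lt hz)
  have hd := HasDerivAt.of_local_left_inverse hg hA (phi_pos hp hS.le).ne' hfg
  have heq : ((1 + (sinhp p y) ^ p) ^ (-1 / p))⁻¹ = coshp p y := by
    rw [coshp, neg_div, Real.rpow_neg (one_add_pos hp hS.le).le, inv_inv]
  rwa [heq] at hd

noncomputable def tau (p : ℝ) (u : ℝ) : ℝ :=
  (sinhp p u) ^ (p - 1) * (1 + (sinhp p u) ^ p) ^ (1 / p - 1)

lemma g_hasDeriv (hp : 1 < p) {u : ℝ} (hu : 0 < u) :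
    HasDerivAt (fun z => Real.log (coshp p z)) (tau p u) u := by
  have hS : 0 < sinhp p u := sinhp_pos hp hu
  have hw : 0 < 1 + (sinhp p u) ^ p := one_add_pos hp hS.le
  -- inner derivative of z ↦ 1 + (sinhp p z)^p
  have h1 : HasDerivAt (fun s : ℝ => s ^ p) (p * (sinhp p u) ^ (p - 1)) (sinhp p u) :=
    Real.hasDerivAt_rpow_const (Or.inl hS.ne')
  have h2 : HasDerivAt (fun z => (sinhp p z) ^ p)
      (p * (sinhp p u) ^ (p - 1) * coshp p u) u :=
    HasDerivAt.comp u h1 (sinhp_hasDeriv hp hu)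
  have h3 : HasDerivAt (fun z => 1 + (sinhp p z) ^ p)
      (p * (sinhp p u) ^ (p - 1) * coshp p u) u := h2.const_add 1
  have h4 : HasDerivAt (fun z => Real.log (1 + (sinhp p z) ^ p))
      ((1 + (sinhp p u) ^ p)⁻¹ * (p * (sinhp p u) ^ (p - 1) * coshp p u)) u := by
    have := (Real.hasDerivAt_log hw.ne').comp u h3
    simpa [mul_comm, Function.comp_def] using this
  have h5 : HasDerivAt (fun z => (1/p) * Real.log (1 + (sinhp p z) ^ p))
      ((1/p) * ((1 + (sinhp p u) ^ p)⁻¹ * (p * (sinhp p u) ^ (p - 1) * coshp p u))) u :=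
    h4.const_mul (1/p)
  have heq : ∀ᶠ z in 𝓝 u, (fun z => (1/p) * Real.log (1 + (sinhp p z) ^ p)) z
      = Real.log (coshp p z) := by
    filter_upwards [Ioi_mem_nhds hu] with z hz
    rw [coshp, Real.log_rpow (one_add_pos hp (sinhp_mem hp (le_of_lt hz)))]
  have h6 := h5.congr_of_eventuallyEq (heq.mono fun z hz => hz.symm)
  have hval : (1/p) * ((1 + (sinhp p u) ^ p)⁻¹ * (p * (sinhp p u) ^ (p - 1) * coshp p u))
      = tau p u := by
    rw [coshp, tau]
    have hp' : p ≠ 0 := (hp0 hp).ne'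
    have : (1 + (sinhp p u) ^ p) ^ (1 / p - 1)
        = (1 + (sinhp p u) ^ p) ^ (1/p : ℝ) * (1 + (sinhp p u) ^ p)⁻¹ := by
      rw [Real.rpow_sub hw, Real.rpow_one, div_eq_mul_inv]
    rw [this]; field_simp
  rwa [hval] at h6

lemma g_contOn (hp : 1 < p) : ContinuousOn (fun z => Real.log (coshp p z)) (Ici 0) := by
  have h1 : ContinuousOn (fun z => 1 + (sinhp p z) ^ p) (Ici 0) :=
    continuousOn_const.add ((sinhp_contOn hp).rpow_const fun z _ => Or.inr (hp0 hp).le)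
  have h2 : ContinuousOn (fun z => coshp p z) (Ici 0) := by
    apply h1.rpow_const
    intro z hz
    exact Or.inl (one_add_pos hp (sinhp_mem hp hz)).ne'
  exact h2.log fun z hz => (coshp_pos hp hz).ne'

lemma tau_strictMonoOn (hp : 1 < p) : StrictMonoOn (tau p) (Ioi 0) := by
  have hq : 0 < (p - 1) / p := div_pos (by linarith) (hp0 hp)
  have key : ∀ u ∈ Ioi (0:ℝ),
      tau p u = ((sinhp p u) ^ p / (1 + (sinhp p u) ^ p)) ^ ((p - 1) / p) := by
    intro u hu
    have hS : 0 < sinhp p u := sinhp_pos hp hu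
    have hw : 0 < 1 + (sinhp p u) ^ p := one_add_pos hp hS.le
    have e1 : ((sinhp p u) ^ p) ^ ((p - 1) / p) = (sinhp p u) ^ (p - 1) := by
      rw [← Real.rpow_mul hS.le, show p * ((p - 1) / p) = p - 1 by field_simp]
    have e2 : (1 : ℝ) / p - 1 = -((p - 1) / p) := by
      field_simp
      ring
    rw [tau, Real.div_rpow (Real.rpow_nonneg hS.le p) hw.le, e1, e2,
      Real.rpow_neg hw.le, ← div_eq_mul_inv]
  intro a ha b hb hab
  rw [key a ha, key b hb]
  have hSa : 0 < sinhp p a := sinhp_pos hp ha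
  have hSb : 0 < sinhp p b := sinhp_pos hp hb
  have hS : sinhp p a < sinhp p b :=
    sinhp_strictMonoOn hp (mem_Ici.2 (le_of_lt ha)) (mem_Ici.2 (le_of_lt hb)) hab
  have hap : 0 < (sinhp p a) ^ p := Real.rpow_pos_of_pos hSa p
  have hbp : 0 < (sinhp p b) ^ p := Real.rpow_pos_of_pos hSb p
  have hplt : (sinhp p a) ^ p < (sinhp p b) ^ p :=
    Real.rpow_lt_rpow hSa.le hS (hp0 hp)
  have hwa : 0 < 1 + (sinhp p a) ^ p := by linarith
  have hwb : 0 < 1 + (sinhp p b) ^ p := by linarith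
  apply Real.rpow_lt_rpow (div_nonneg hap.le hwa.le) _ hq
  rw [div_lt_div_iff₀ hwa hwb]
  nlinarith

lemma g_zero (hp : 1 < p) : Real.log (coshp p 0) = 0 := by
  rw [coshp, sinhp_zero hp, Real.zero_rpow (hp0 hp).ne', add_zero, Real.one_rpow, Real.log_one]

lemma g_lt (hp : 1 < p) {u : ℝ} (hu : 0 < u) :
    Real.log (coshp p u) < u * tau p u := by
  obtain ⟨c, hc, hceq⟩ := exists_hasDerivAt_eq_slope (fun z => Real.log (coshp p z)) (tau p) hu
    ((g_contOn hp).mono (Icc_subset_Ici_self))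
    (fun z hz => g_hasDeriv hp hz.1)
  rw [g_zero hp, sub_zero, sub_zero] at hceq
  have : Real.log (coshp p u) = u * tau p c := by
    field_simp at hceq
    linarith [hceq]
  rw [this]
  have := tau_strictMonoOn hp hc.1 (lt_trans hc.1 hc.2) hc.2
  exact mul_lt_mul_of_pos_left this hu

lemma psi_strictAnti (hp : 1 < p) {u v : ℝ} (hu : 0 < u) (huv : u < v) :
    Real.log (coshp p v) - v * tau p v < Real.log (coshp p u) - u * tau p u := by
  have hv : 0 < v := lt_trans hu huv
  obtain ⟨c, hc, hceq⟩ := exists_hasDerivAt_eq_slope (fun z => Real.log (coshp p z)) (tau p) huv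
    ((g_contOn hp).mono (fun z hz => le_trans hu.le hz.1))
    (fun z hz => g_hasDeriv hp (lt_trans hu hz.1))
  have hcu : 0 < c := lt_trans hu hc.1
  have h1 : Real.log (coshp p v) - Real.log (coshp p u) = (v - u) * tau p c := by
    rw [eq_div_iff (by linarith : v - u ≠ 0)] at hceq
    linarith [hceq]
  have h2 : tau p c < tau p v := tau_strictMonoOn hp hcu hv hc.2
  have h3 : tau p u < tau p c := tau_strictMonoOn hp hu hcu hc.1
  nlinarith


lemma h_hasDeriv (hp : 1 < p) {x : ℝ} (hx : 0 < x) {t : ℝ} (ht : 0 < t) :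
    HasDerivAt (fun t => t * Real.log (coshp p (x / t)))
      (Real.log (coshp p (x / t)) - (x / t) * tau p (x / t)) t := by
  have hxt : 0 < x / t := div_pos hx ht
  have h1 : HasDerivAt (fun s : ℝ => x / s) (-(x / t ^ 2)) t := by
    have := HasDerivAt.const_mul x (hasDerivAt_inv ht.ne')
    simpa [div_eq_mul_inv, mul_neg] using this
  have h2 : HasDerivAt (fun s => Real.log (coshp p (x / s)))
      (tau p (x / t) * -(x / t ^ 2)) t := (g_hasDeriv hp hxt).comp t h1
  have h3 : HasDerivAt (fun s => s * Real.log (coshp p (x / s)))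
      (1 * Real.log (coshp p (x / t)) + t * (tau p (x / t) * -(x / t ^ 2))) t :=
    (hasDerivAt_id t).mul h2
  convert h3 using 1
  field_simp
  ring

end Stmt19Aux


open Stmt19Aux in
theorem stmt19 (p : ℝ) (hp : 1 < p) (x : ℝ) (hx : 0 < x) :
    StrictAntiOn (fun t => coshp p (x / t) ^ t) (Set.Ioi 0) ∧
    ConvexOn ℝ (Set.Ioi 0) (fun t => Real.log (coshp p (x / t) ^ t)) := by

  have hcont : ContinuousOn (fun t => t * Real.log (coshp p (x / t))) (Ioi 0) :=
    fun t ht => ((h_hasDeriv hp hx ht).continuousAt).continuousWithinAt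
  have hderiv : ∀ t ∈ Ioi (0:ℝ), deriv (fun t => t * Real.log (coshp p (x / t))) t
      = Real.log (coshp p (x / t)) - (x / t) * tau p (x / t) :=
    fun t ht => (h_hasDeriv hp hx ht).deriv
  have hanti : StrictAntiOn (fun t => t * Real.log (coshp p (x / t))) (Ioi 0) := by
    apply strictAntiOn_of_deriv_neg (convex_Ioi 0) hcont
    intro t ht
    rw [interior_Ioi] at ht
    rw [hderiv t ht]
    have hxt : 0 < x / t := div_pos hx ht
    have := g_lt hp hxt
    linarith
  have hmono : MonotoneOn (deriv (fun t => t * Real.log (coshp p (x / t))))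
      (interior (Ioi (0:ℝ))) := by
    rw [interior_Ioi]
    intro a ha b hb hab
    rw [hderiv a ha, hderiv b hb]
    rcases eq_or_lt_of_le hab with rfl | hab'
    · exact le_rfl
    · have h1 : x / b < x / a := div_lt_div_of_pos_left hx ha hab'
      have := psi_strictAnti hp (div_pos hx hb) h1
      linarith
  have hconv : ConvexOn ℝ (Ioi 0) (fun t => t * Real.log (coshp p (x / t))) := by
    apply MonotoneOn.convexOn_of_deriv (convex_Ioi 0) hcont _ hmono
    rw [interior_Ioi]
    exact fun t ht => (h_hasDeriv hp hx ht).differentiableAt.differentiableWithinAt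
  constructor
  · intro a ha b hb hab
    have hpa : 0 < coshp p (x / a) := coshp_pos hp (div_pos hx ha).le
    have hpb : 0 < coshp p (x / b) := coshp_pos hp (div_pos hx hb).le
    dsimp only
    rw [Real.rpow_def_of_pos hpa, Real.rpow_def_of_pos hpb]
    apply Real.exp_lt_exp.2
    have h2 := hanti ha hb hab
    nlinarith [h2]
  · apply hconv.congr
    intro t ht
    have hxt : 0 < x / t := div_pos hx ht
    show t * Real.log (coshp p (x / t)) = Real.log (coshp p (x / t) ^ t)
    rw [Real.log_rpow (coshp_pos hp hxt.le)]
end
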